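/- arXiv:2109.04519 — 4 statements merged into one kernel-verified Lean document; each statement's English description precedes it below -/
import Mathlib

section
/- For every integer k with 0 ≤ k ≤ α_t, c_k(I) = Σ_{i=k}^{α_t} (−1)^{i−k} · b_i(I); in particular, each c_k(I) is an integer. -/
open Finset

/-- Sequences of length `ℓ` (positions `1..ℓ`) with entries in `{1,…,n}`,
encoded as functions `ℕ → ℕ` vanishing outside `[1, ℓ]`. -/
def Seqs (ℓ n : ℕ) : Set (ℕ → ℕ) :=
  {v | (∀ i ∈ Finset.Icc 1 ℓ, v i ∈ Finset.Icc 1 n) ∧ ∀ i, i ∉ Finset.Icc 1 ℓ → v i = 0}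

/-- Descent set of a sequence of length `ℓ`:
`Des(v) = {i ∈ {1,…,ℓ-1} : v_i > v_{i+1}}`. -/
def Des (ℓ : ℕ) (v : ℕ → ℕ) : Set ℕ :=
  {i | 1 ≤ i ∧ i < ℓ ∧ v (i + 1) < v i}

/-- Number of occurrences of the value `j` among positions `1..ℓ` of `v`. -/
def mult (ℓ : ℕ) (v : ℕ → ℕ) (j : ℕ) : ℕ :=
  ((Finset.Icc 1 ℓ).filter fun i => v i = j).card

/-- `𝔡^m(I, n)`: the number of sequences of length `n*m`, in which each of `1,…,n`
appears exactly `m` times, whose descent set is `I`. -/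
noncomputable def dP (m : ℕ) (I : Finset ℕ) (n : ℕ) : ℕ :=
  Set.ncard {w ∈ Seqs (n * m) n |
    Des (n * m) w = ↑I ∧ ∀ j ∈ Finset.Icc 1 n, mult (n * m) w j = m}

/-- `N(I, n)`: the number of sequences `v = (v_1, …, v_{α_t})` with entries in `{1,…,n}`
such that `Des v = I \ {α_t}` and `v_{α_t} ≠ 1`. -/
noncomputable def Ncount (I : Finset ℕ) (n : ℕ) : ℕ :=
  Set.ncard {v ∈ Seqs (I.sup id) n |
    Des (I.sup id) v = ↑(I.erase (I.sup id)) ∧ v (I.sup id) ≠ 1}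

/-- `D^m(I, n)`: the number of sequences `v = (v_1, …, v_{α_t})` with entries in `{1,…,n}`
such that `Des v = I \ {α_t}` and each of `1,…,n` appears at most `m` times in `v`. -/
noncomputable def Dcount (m : ℕ) (I : Finset ℕ) (n : ℕ) : ℕ :=
  Set.ncard {v ∈ Seqs (I.sup id) n |
    Des (I.sup id) v = ↑(I.erase (I.sup id)) ∧ ∀ j ∈ Finset.Icc 1 n, mult (I.sup id) v j ≤ m}

/-- `b_i(I)`: the number of sequences `v = (v_1, …, v_{α_t})` with entries in `{1,…,i+1}`
such that `Des v = I \ {α_t}`, every number in `{2,…,i+1}` occurs in `v`, and `v_{α_t} ≠ 1`. -/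
noncomputable def bcoef (I : Finset ℕ) (i : ℕ) : ℕ :=
  Set.ncard {v ∈ Seqs (I.sup id) (i + 1) |
    Des (I.sup id) v = ↑(I.erase (I.sup id)) ∧
    (∀ l ∈ Finset.Icc 2 (i + 1), ∃ j ∈ Finset.Icc 1 (I.sup id), v j = l) ∧
    v (I.sup id) ≠ 1}

/-- `L(I)`: the length of the longest run of consecutive integers contained in `I`. -/
def longestRun (I : Finset ℕ) : ℕ :=
  I.sup fun a => ((Finset.Icc a (I.sup id)).filter fun b => Finset.Icc a b ⊆ I).card

/-- `alphaVal I k` is the `k`-th smallest element of `I` (`1`-indexed), with `alphaVal I 0 = 0`. -/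
def alphaVal (I : Finset ℕ) (k : ℕ) : ℕ :=
  if k = 0 then 0 else (I.sort (· ≤ ·)).getD (k - 1) 0

/-- For a composition `A = (a_1,…,a_s)` of `t = |I|`, `sigmaC I A i` is
`σ_{i+1} = β_{a_1+⋯+a_i+1} + ⋯ + β_{a_1+⋯+a_{i+1}}`, where `β` is the sequence of first
differences of `(0, α_1, …, α_t)`; by telescoping this equals
`α_{a_1+⋯+a_{i+1}} - α_{a_1+⋯+a_i}`. -/
def sigmaC (I : Finset ℕ) {t : ℕ} (A : Composition t) (i : ℕ) : ℕ :=
  alphaVal I (A.sizeUpTo (i + 1)) - alphaVal I (A.sizeUpTo i)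

/-- `C(A, I)` for a composition `A = (a_1,…,a_r)`: the number of sequences
`v = (v_1, …, v_{α_t})` with entries in `{1,…,r}` such that `Des v = I \ {α_t}`
and the number `j` appears exactly `a_j` times in `v`, for each `j ∈ {1,…,r}`. -/
noncomputable def Ccount (I : Finset ℕ) {N : ℕ} (A : Composition N) : ℕ :=
  Set.ncard {v ∈ Seqs (I.sup id) A.length |
    Des (I.sup id) v = ↑(I.erase (I.sup id)) ∧
    ∀ j ∈ Finset.Icc 1 A.length, mult (I.sup id) v j = A.blocks.getD (j - 1) 0}

/-- The generalized binomial coefficient `C(a, i) = a(a-1)⋯(a-i+1)/i!` for an integer `a`. -/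
def genChoose (a : ℤ) (i : ℕ) : ℚ :=
  (∏ j ∈ Finset.range i, ((a : ℚ) - (j : ℚ))) / (Nat.factorial i)
lemma seqs_finite (ℓ n : ℕ) : (Seqs ℓ n).Finite := by
  have : Set.InjOn (fun (v : ℕ → ℕ) (i : Finset.Icc 1 ℓ) => (⟨min (v i.1) n, Nat.lt_succ_of_le (min_le_right _ _)⟩ : Fin (n+1))) (Seqs ℓ n) := by
    intro v hv w hw h
    funext j
    by_cases hj : j ∈ Finset.Icc 1 ℓ
    · have h1 := congrFun h ⟨j, hj⟩
      have hv1 := hv.1 j hj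
      have hw1 := hw.1 j hj
      simp only [Finset.mem_Icc] at hv1 hw1
      have : min (v j) n = min (w j) n := congrArg Fin.val h1
      rw [min_eq_left hv1.2, min_eq_left hw1.2] at this
      exact this
    · rw [hv.2 j hj, hw.2 j hj]
  exact Set.Finite.of_finite_image (Set.toFinite _) this

lemma fiber_ncard (α n : ℕ) (hα : 1 ≤ α) (hn : 1 ≤ n) (J : Finset ℕ)
    (S : Finset ℕ) (hS : S ⊆ Finset.Icc 2 n) :
    {v | v ∈ Seqs α n ∧ (Des α v = ↑J ∧ v α ≠ 1) ∧ ((Finset.Icc 1 α).image v).erase 1 = S}.ncard =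
    {w | w ∈ Seqs α (S.card + 1) ∧ Des α w = ↑J ∧
      (∀ l ∈ Finset.Icc 2 (S.card + 1), ∃ j ∈ Finset.Icc 1 α, w j = l) ∧ w α ≠ 1}.ncard := by
  classical
  set i := S.card with hi
  have hS2 : ∀ x ∈ S, 2 ≤ x ∧ x ≤ n := by
    intro x hx; have := hS hx; simpa [Finset.mem_Icc] using this
  have h1S : (1 : ℕ) ∉ S := fun h => by have := (hS2 1 h).1; omega
  set T : Finset ℕ := insert 1 S with hT
  have hTcard : T.card = i + 1 := by rw [hT, Finset.card_insert_of_notMem h1S]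
  have hT1 : ∀ x ∈ T, 1 ≤ x := by
    intro x hx; rcases Finset.mem_insert.1 hx with h | h
    · omega
    · exact le_of_lt (by have := (hS2 x h).1; omega)
  set f : ℕ → ℕ := fun x => if x = 0 then 0 else 1 + (S.filter (· ≤ x)).card with hf
  have hf0 : f 0 = 0 := by simp [hf]
  have hf1 : f 1 = 1 := by
    have : S.filter (· ≤ 1) = ∅ := by
      rw [Finset.filter_eq_empty_iff]; intro x hx; have := (hS2 x hx).1; omega
    simp [hf, this]
  have fmono : ∀ x y : ℕ, x ≤ y → f x ≤ f y := by
    intro x y hxy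
    by_cases hx : x = 0
    · simp [hf, hx]
    · have hy : y ≠ 0 := by omega
      simp only [hf, if_neg hx, if_neg hy]
      have : S.filter (· ≤ x) ⊆ S.filter (· ≤ y) := by
        intro a ha
        rw [Finset.mem_filter] at ha ⊢
        exact ⟨ha.1, le_trans ha.2 hxy⟩
      have := Finset.card_le_card this; omega
  have fstrict : ∀ x ∈ T, ∀ y ∈ T, x < y → f x < f y := by
    intro x hx y hy hxy
    have hx1 : 1 ≤ x := hT1 x hx
    have hyS : y ∈ S := by
      rcases Finset.mem_insert.1 hy with h | h
      · omega
      · exact h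
    have hxne : x ≠ 0 := by omega
    have hyne : y ≠ 0 := by omega
    simp only [hf, if_neg hxne, if_neg hyne]
    have hss : S.filter (· ≤ x) ⊂ S.filter (· ≤ y) := by
      constructor
      · intro a ha
        rw [Finset.mem_filter] at ha ⊢
        exact ⟨ha.1, le_trans ha.2 (le_of_lt hxy)⟩
      · intro hsub
        have : y ∈ S.filter (· ≤ y) := Finset.mem_filter.2 ⟨hyS, by simp⟩
        have := hsub this
        have := (Finset.mem_filter.1 this).2
        omega
    have := Finset.card_lt_card hss; omega
  have finj : ∀ x ∈ T, ∀ y ∈ T, f x = f y → x = y := by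
    intro x hx y hy hxy
    rcases lt_trichotomy x y with h | h | h
    · exact absurd hxy (ne_of_lt (fstrict x hx y hy h))
    · exact h
    · exact absurd hxy.symm (ne_of_lt (fstrict y hy x hx h))
  have fmem : ∀ x ∈ T, f x ∈ Finset.Icc 1 (i + 1) := by
    intro x hx
    have hx1 : 1 ≤ x := hT1 x hx
    have hxne : x ≠ 0 := by omega
    simp only [hf, if_neg hxne, Finset.mem_Icc]
    have := Finset.card_le_card (Finset.filter_subset (· ≤ x) S)
    omega
  have fimage : T.image f = Finset.Icc 1 (i + 1) := by
    apply Finset.eq_of_subset_of_card_le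
    · intro y hy
      rcases Finset.mem_image.1 hy with ⟨x, hx, rfl⟩
      exact fmem x hx
    · rw [Finset.card_image_of_injOn (fun x hx y hy => finj x hx y hy), hTcard,
        Nat.card_Icc]
      omega
  have fsurj : ∀ y ∈ Finset.Icc 1 (i + 1), ∃ x ∈ T, f x = y := by
    intro y hy
    rw [← fimage] at hy
    rcases Finset.mem_image.1 hy with ⟨x, hx, rfl⟩
    exact ⟨x, hx, rfl⟩
  set g : ℕ → ℕ := fun y => if y = 0 then 0 else Function.invFunOn f ↑T y with hg
  have hg0 : g 0 = 0 := by simp [hg]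
  have gmem : ∀ y ∈ Finset.Icc 1 (i + 1), g y ∈ T ∧ f (g y) = y := by
    intro y hy
    have hyne : y ≠ 0 := by have := (Finset.mem_Icc.1 hy).1; omega
    have hex : ∃ x ∈ (↑T : Set ℕ), f x = y := by
      rcases fsurj y hy with ⟨x, hx, hfx⟩; exact ⟨x, hx, hfx⟩
    refine ⟨?_, ?_⟩
    · simp only [hg, if_neg hyne]
      exact Function.invFunOn_mem hex
    · simp only [hg, if_neg hyne]
      exact Function.invFunOn_eq hex
  have ginv : ∀ x ∈ T, g (f x) = x := by
    intro x hx
    have h := gmem (f x) (fmem x hx)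
    exact finj _ h.1 x hx h.2
  have g1 : g 1 = 1 := by
    have := ginv 1 (Finset.mem_insert_self 1 S)
    rwa [hf1] at this
  have gmono : ∀ a ∈ Finset.Icc 1 (i+1), ∀ b ∈ Finset.Icc 1 (i+1), a < b → g a < g b := by
    intro a ha b hb hab
    by_contra h
    push_neg at h
    have := fmono _ _ h
    rw [(gmem a ha).2, (gmem b hb).2] at this
    omega
  -- the maps on sequences
  set F : (ℕ → ℕ) → (ℕ → ℕ) := fun v j => f (v j) with hF
  set G : (ℕ → ℕ) → (ℕ → ℕ) := fun w j => g (w j) with hG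
  set A : Set (ℕ → ℕ) := {v | v ∈ Seqs α n ∧ (Des α v = ↑J ∧ v α ≠ 1) ∧ ((Finset.Icc 1 α).image v).erase 1 = S} with hA
  set B : Set (ℕ → ℕ) := {w | w ∈ Seqs α (i + 1) ∧ Des α w = ↑J ∧
      (∀ l ∈ Finset.Icc 2 (i + 1), ∃ j ∈ Finset.Icc 1 α, w j = l) ∧ w α ≠ 1} with hB
  have hαmem : α ∈ Finset.Icc 1 α := Finset.mem_Icc.2 ⟨hα, le_refl _⟩
  have hvT : ∀ v ∈ A, ∀ j ∈ Finset.Icc 1 α, v j ∈ T := by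
    intro v hv j hj
    by_cases h1 : v j = 1
    · rw [h1]; exact Finset.mem_insert_self 1 S
    · have : v j ∈ ((Finset.Icc 1 α).image v).erase 1 :=
        Finset.mem_erase.2 ⟨h1, Finset.mem_image_of_mem v hj⟩
      rw [hv.2.2] at this
      exact Finset.mem_insert_of_mem this
  have mapsAB : ∀ v ∈ A, F v ∈ B := by
    intro v hv
    obtain ⟨⟨hv1, hv2⟩, ⟨hvDes, hvne⟩, hvS⟩ := hv
    refine ⟨⟨?_, ?_⟩, ?_, ?_, ?_⟩
    · intro j hj; exact fmem _ (hvT v ⟨⟨hv1, hv2⟩, ⟨hvDes, hvne⟩, hvS⟩ j hj)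
    · intro j hj; simp only [hF]; rw [hv2 j hj, hf0]
    · rw [← hvDes]
      ext x
      simp only [Des, Set.mem_setOf_eq, hF]
      constructor
      · rintro ⟨h1, h2, h3⟩
        refine ⟨h1, h2, ?_⟩
        by_contra h
        push_neg at h
        exact absurd (fmono _ _ h) (not_le_of_gt h3)
      · rintro ⟨h1, h2, h3⟩
        refine ⟨h1, h2, ?_⟩
        have hx : x ∈ Finset.Icc 1 α := Finset.mem_Icc.2 ⟨h1, le_of_lt h2⟩
        have hx1 : x + 1 ∈ Finset.Icc 1 α := Finset.mem_Icc.2 ⟨by omega, h2⟩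
        exact fstrict _ (hvT v ⟨⟨hv1, hv2⟩, ⟨hvDes, hvne⟩, hvS⟩ (x+1) hx1) _
          (hvT v ⟨⟨hv1, hv2⟩, ⟨hvDes, hvne⟩, hvS⟩ x hx) h3
    · intro l hl
      have hl' : l ∈ Finset.Icc 1 (i+1) := by
        have := Finset.mem_Icc.1 hl; exact Finset.mem_Icc.2 ⟨by omega, this.2⟩
      rcases fsurj l hl' with ⟨x, hx, hfx⟩
      have hx1 : x ≠ 1 := by
        intro h; rw [h, hf1] at hfx; have := Finset.mem_Icc.1 hl; omega
      have hxS : x ∈ S := by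
        rcases Finset.mem_insert.1 hx with h | h
        · exact absurd h hx1
        · exact h
      have : x ∈ ((Finset.Icc 1 α).image v).erase 1 := by rw [hvS]; exact hxS
      rcases Finset.mem_image.1 (Finset.mem_erase.1 this).2 with ⟨j, hj, hvj⟩
      exact ⟨j, hj, by simp only [hF]; rw [hvj, hfx]⟩
    · intro h
      have hvα : v α ∈ T := hvT v ⟨⟨hv1, hv2⟩, ⟨hvDes, hvne⟩, hvS⟩ α hαmem
      have : v α = 1 := finj _ hvα 1 (Finset.mem_insert_self 1 S) (by rw [hf1]; exact h)
      exact hvne this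
  have hwI : ∀ w ∈ B, ∀ j ∈ Finset.Icc 1 α, w j ∈ Finset.Icc 1 (i+1) := by
    intro w hw j hj; exact hw.1.1 j hj
  have mapsBA : ∀ w ∈ B, G w ∈ A := by
    intro w hw
    obtain ⟨⟨hw1, hw2⟩, hwDes, hwocc, hwne⟩ := hw
    have hwmem : ∀ j ∈ Finset.Icc 1 α, G w j ∈ T ∧ f (G w j) = w j := by
      intro j hj; exact gmem (w j) (hw1 j hj)
    refine ⟨⟨?_, ?_⟩, ⟨?_, ?_⟩, ?_⟩
    · intro j hj
      have h := (hwmem j hj).1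
      rcases Finset.mem_insert.1 h with h' | h'
      · simp only [hG]; rw [show g (w j) = G w j from rfl, h']
        exact Finset.mem_Icc.2 ⟨le_refl _, hn⟩
      · have := hS2 _ h'
        exact Finset.mem_Icc.2 ⟨by omega, this.2⟩
    · intro j hj; simp only [hG]; rw [hw2 j hj, hg0]
    · rw [← hwDes]
      ext x
      simp only [Des, Set.mem_setOf_eq, hG]
      constructor
      · rintro ⟨h1, h2, h3⟩
        refine ⟨h1, h2, ?_⟩
        by_contra h
        push_neg at h
        have hx : x ∈ Finset.Icc 1 α := Finset.mem_Icc.2 ⟨h1, le_of_lt h2⟩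
        have hx1 : x + 1 ∈ Finset.Icc 1 α := Finset.mem_Icc.2 ⟨by omega, h2⟩
        rcases lt_or_eq_of_le h with h' | h'
        · exact absurd (gmono _ (hw1 x hx) _ (hw1 (x+1) hx1) h') (by omega)
        · rw [h'] at h3; omega
      · rintro ⟨h1, h2, h3⟩
        have hx : x ∈ Finset.Icc 1 α := Finset.mem_Icc.2 ⟨h1, le_of_lt h2⟩
        have hx1 : x + 1 ∈ Finset.Icc 1 α := Finset.mem_Icc.2 ⟨by omega, h2⟩
        exact ⟨h1, h2, gmono _ (hw1 (x+1) hx1) _ (hw1 x hx) h3⟩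
    · intro h
      have h2 := (hwmem α hαmem).2
      simp only [hG] at h h2
      rw [h, hf1] at h2
      exact hwne h2.symm
    · ext x
      simp only [Finset.mem_erase, Finset.mem_image]
      constructor
      · rintro ⟨hx1, j, hj, hgx⟩
        have hmem := (hwmem j hj).1
        simp only [hG] at hmem hgx
        rw [hgx] at hmem
        rcases Finset.mem_insert.1 hmem with h | h
        · exact absurd h hx1
        · exact h
      · intro hxS
        have hx2 := hS2 x hxS
        have hxT : x ∈ T := Finset.mem_insert_of_mem hxS
        have hfx : f x ∈ Finset.Icc 1 (i+1) := fmem x hxT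
        have hfx1 : f x ≠ 1 := by
          intro h
          have : x = 1 := finj x hxT 1 (Finset.mem_insert_self 1 S) (by rw [hf1]; exact h)
          omega
        have hfx2 : f x ∈ Finset.Icc 2 (i+1) := by
          have := Finset.mem_Icc.1 hfx; exact Finset.mem_Icc.2 ⟨by omega, this.2⟩
        rcases hwocc (f x) hfx2 with ⟨j, hj, hwj⟩
        refine ⟨by omega, j, hj, ?_⟩
        simp only [hG]; rw [hwj, ginv x hxT]
  have linv : ∀ v ∈ A, G (F v) = v := by
    intro v hv
    funext j
    by_cases hj : j ∈ Finset.Icc 1 α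
    · simp only [hG, hF]
      exact ginv _ (hvT v hv j hj)
    · simp only [hG, hF]
      rw [hv.1.2 j hj, hf0, hg0]
  have rinv : ∀ w ∈ B, F (G w) = w := by
    intro w hw
    funext j
    by_cases hj : j ∈ Finset.Icc 1 α
    · simp only [hG, hF]
      exact (gmem _ (hw.1.1 j hj)).2
    · simp only [hG, hF]
      rw [hw.1.2 j hj, hg0, hf0]
  have bij : Set.BijOn F A B := by
    apply Set.InvOn.bijOn (f' := G) ⟨fun v hv => linv v hv, fun w hw => rinv w hw⟩
      (fun v hv => mapsAB v hv) (fun w hw => mapsBA w hw)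
  rw [← bij.image_eq, Set.ncard_image_of_injOn bij.injOn]

lemma bcoef_zero (I : Finset ℕ) (i : ℕ) (h : I.sup id < i) : bcoef I i = 0 := by
  rw [bcoef]
  convert Set.ncard_empty (ℕ → ℕ)
  ext v
  simp only [Set.mem_setOf_eq, Set.mem_empty_iff_false, iff_false]
  rintro ⟨hseq, hdes, hocc, hne⟩
  have hsub : Finset.Icc 2 (i+1) ⊆ (Finset.Icc 1 (I.sup id)).image v := by
    intro l hl
    rcases hocc l hl with ⟨j, hj, hvj⟩
    exact Finset.mem_image.2 ⟨j, hj, hvj⟩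
  have h1 := Finset.card_le_card hsub
  have h2 := Finset.card_image_le (s := Finset.Icc 1 (I.sup id)) (f := v)
  simp [Nat.card_Icc] at h1 h2
  omega

lemma partB (I : Finset ℕ) (hα : 1 ≤ I.sup id) (n : ℕ) (hn : 1 ≤ n) :
    Ncount I n = ∑ i ∈ Finset.range (I.sup id + 1), (n-1).choose i * bcoef I i := by
  classical
  set α := I.sup id with hαdef
  set J := I.erase α with hJ
  have hfin : {v ∈ Seqs α n | Des α v = ↑J ∧ v α ≠ 1}.Finite :=
    (seqs_finite α n).subset (fun v hv => hv.1)
  have h0 : Ncount I n = hfin.toFinset.card := by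
    rw [Ncount, ← Set.ncard_coe_finset, Set.Finite.coe_toFinset]
  have hmem : ∀ v ∈ hfin.toFinset,
      ((Finset.Icc 1 α).image v).erase 1 ∈ (Finset.Icc 2 n).powerset := by
    intro v hv
    rw [Set.Finite.mem_toFinset] at hv
    rw [Finset.mem_powerset]
    intro x hx
    rcases Finset.mem_erase.1 hx with ⟨hx1, hx2⟩
    rcases Finset.mem_image.1 hx2 with ⟨j, hj, hvj⟩
    have := hv.1.1 j hj
    rw [hvj] at this
    rw [Finset.mem_Icc] at this ⊢
    omega
  have h1 := Finset.card_eq_sum_card_fiberwise hmem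
  have h2 : ∀ S ∈ (Finset.Icc 2 n).powerset,
      (hfin.toFinset.filter (fun v => ((Finset.Icc 1 α).image v).erase 1 = S)).card
        = bcoef I S.card := by
    intro S hS
    rw [Finset.mem_powerset] at hS
    rw [← Set.ncard_coe_finset]
    have hcoe : ↑(hfin.toFinset.filter (fun v => ((Finset.Icc 1 α).image v).erase 1 = S)) =
        {v | v ∈ Seqs α n ∧ (Des α v = ↑J ∧ v α ≠ 1) ∧ ((Finset.Icc 1 α).image v).erase 1 = S} := by
      ext v
      simp only [Finset.coe_filter, Set.Finite.mem_toFinset, Set.mem_setOf_eq]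
      tauto
    rw [hcoe, fiber_ncard α n hα hn J S hS, bcoef]
  rw [h0, h1, Finset.sum_congr rfl h2, Finset.sum_powerset_apply_card (fun m => bcoef I m)]
  have hcard : (Finset.Icc 2 n).card = n - 1 := by rw [Nat.card_Icc]; omega
  rw [hcard]
  have hrw : n - 1 + 1 = n := by omega
  rw [hrw]
  -- now goal: ∑ m in range n, (n-1).choose m • bcoef I m = ∑ i in range (α+1), (n-1).choose i * bcoef I i
  simp only [smul_eq_mul]
  rcases le_total n (α + 1) with h | h
  · apply Finset.sum_subset (Finset.range_subset_range.2 h)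
    intro m _ hm
    rw [Finset.mem_range, not_lt] at hm
    rw [Nat.choose_eq_zero_of_lt (by omega), zero_mul]
  · symm
    apply Finset.sum_subset (Finset.range_subset_range.2 h)
    intro m _ hm
    rw [Finset.mem_range, not_lt] at hm
    rw [bcoef_zero I m (by omega), mul_zero]

lemma chooseAlt (m : ℕ) : ∀ i : ℕ, (Nat.choose m i : ℚ) =
    ∑ k ∈ Finset.range (i+1), (-1:ℚ)^(i-k) * ((m+1).choose k : ℚ) := by
  intro i
  induction i with
  | zero => simp
  | succ i ih =>
    rw [Finset.sum_range_succ]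
    have hshift : ∑ k ∈ Finset.range (i+1), (-1:ℚ)^(i+1-k) * ((m+1).choose k : ℚ)
        = - ∑ k ∈ Finset.range (i+1), (-1:ℚ)^(i-k) * ((m+1).choose k : ℚ) := by
      rw [← Finset.sum_neg_distrib]
      apply Finset.sum_congr rfl
      intro k hk
      rw [Finset.mem_range] at hk
      have : i + 1 - k = (i - k) + 1 := by omega
      rw [this, pow_succ]
      ring
    rw [hshift, ← ih]
    have hp : ((m+1).choose (i+1) : ℚ) = (m.choose i : ℚ) + (m.choose (i+1) : ℚ) := by
      rw [Nat.choose_succ_succ]; push_cast; ring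
    rw [hp]
    simp

lemma swap_sum (α m : ℕ) (b : ℕ → ℚ) :
    ∑ i ∈ Finset.range (α+1), b i * (Nat.choose m i : ℚ)
    = ∑ k ∈ Finset.range (α+1),
        (∑ i ∈ Finset.Icc k α, (-1:ℚ)^(i-k) * b i) * (Nat.choose (m+1) k : ℚ) := by
  have h1 : ∀ i ∈ Finset.range (α+1), b i * (m.choose i : ℚ)
      = ∑ k ∈ Finset.range (α+1),
          (if k ≤ i then (-1:ℚ)^(i-k) * b i * ((m+1).choose k : ℚ) else 0) := by
    intro i hi
    rw [Finset.mem_range] at hi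
    rw [Finset.sum_ite, Finset.sum_const_zero, add_zero]
    have hfil : (Finset.range (α+1)).filter (fun k => k ≤ i) = Finset.range (i+1) := by
      ext k; simp only [Finset.mem_filter, Finset.mem_range]; omega
    rw [hfil, chooseAlt m i, Finset.mul_sum]
    apply Finset.sum_congr rfl
    intro k _
    ring
  rw [Finset.sum_congr rfl h1, Finset.sum_comm]
  apply Finset.sum_congr rfl
  intro k _
  rw [Finset.sum_ite, Finset.sum_const_zero, add_zero]
  have hfil : (Finset.range (α+1)).filter (fun i => k ≤ i) = Finset.Icc k α := by
    ext i; simp only [Finset.mem_filter, Finset.mem_range, Finset.mem_Icc]; omega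
  rw [hfil, Finset.sum_mul]

lemma uniq : ∀ (m : ℕ) (e : ℕ → ℚ),
    (∀ n : ℕ, 1 ≤ n → ∑ i ∈ Finset.range (m+1), e i * (n.choose i : ℚ) = 0) →
    ∀ k, k ≤ m → e k = 0 := by
  intro m
  induction m with
  | zero =>
    intro e he k hk
    interval_cases k
    simpa using he 1 (le_refl 1)
  | succ m ih =>
    intro e he k hk
    have he' : ∀ n : ℕ, 1 ≤ n → ∑ i ∈ Finset.range (m+1), e (i+1) * (n.choose i : ℚ) = 0 := by
      intro n hn
      have hA := he (n+1) (by omega)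
      have hB := he n hn
      have key : ∑ i ∈ Finset.range (m+2), e i * (((n+1).choose i : ℚ) - (n.choose i : ℚ))
          = ∑ i ∈ Finset.range (m+1), e (i+1) * (n.choose i : ℚ) := by
        rw [Finset.sum_range_succ']
        have h0 : e 0 * (((n+1).choose 0 : ℚ) - ((n).choose 0 : ℚ)) = 0 := by simp
        rw [h0, add_zero]
        apply Finset.sum_congr rfl
        intro i _
        have hp : ((n+1).choose (i+1) : ℚ) = (n.choose i : ℚ) + (n.choose (i+1) : ℚ) := by
          rw [Nat.choose_succ_succ]; push_cast; ring
        rw [hp]; ring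
      rw [← key]
      simp only [mul_sub, Finset.sum_sub_distrib]
      rw [hA, hB, sub_zero]
    have h1 : ∀ j, 1 ≤ j → j ≤ m+1 → e j = 0 := by
      intro j hj1 hj2
      have := ih (fun i => e (i+1)) he' (j-1) (by omega)
      rwa [Nat.sub_add_cancel hj1] at this
    by_cases hk0 : k = 0
    · subst hk0
      have h := he 1 (le_refl 1)
      have hsum : ∑ i ∈ Finset.range (m+2), e i * ((1:ℕ).choose i : ℚ)
          = e 0 * ((1:ℕ).choose 0 : ℚ) := by
        apply Finset.sum_eq_single_of_mem 0 (by simp)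
        intro i hi hne
        rw [Finset.mem_range] at hi
        rw [h1 i (by omega) (by omega), zero_mul]
      rw [hsum] at h
      simpa using h
    · exact h1 k (by omega) hk

/-- if `c_0,…,c_{α_t}` are the coefficients of `N(I,n)` in the basis
`(C(n,i))_i`, then `c_k = Σ_{i=k}^{α_t} (-1)^{i-k} b_i(I)` for `0 ≤ k ≤ α_t`;
in particular each `c_k` is an integer. -/
theorem stmt_14 (I : Finset ℕ) (hI : I.Nonempty) (hIpos : ∀ x ∈ I, 1 ≤ x)
    (c : ℕ → ℚ)
    (hc : ∀ n : ℕ, 1 ≤ n →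
      (Ncount I n : ℚ) = ∑ i ∈ Finset.range (I.sup id + 1), c i * (n.choose i : ℚ)) :
    ∀ k ≤ I.sup id,
      c k = ((∑ i ∈ Finset.Icc k (I.sup id), (-1 : ℤ) ^ (i - k) * (bcoef I i : ℤ)) : ℚ) := by
  intro k hk
  obtain ⟨x, hx⟩ := hI
  have hα : 1 ≤ I.sup id := le_trans (hIpos x hx) (Finset.le_sup (f := id) hx)
  have hNd : ∀ n : ℕ, 1 ≤ n → (Ncount I n : ℚ) =
      ∑ j ∈ Finset.range (I.sup id + 1),
        (∑ i ∈ Finset.Icc j (I.sup id), (-1:ℚ)^(i-j) * (bcoef I i : ℚ)) * (n.choose j : ℚ) := by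
    intro n hn
    have hB := partB I hα n hn
    have hcast : (Ncount I n : ℚ) =
        ∑ i ∈ Finset.range (I.sup id + 1), (bcoef I i : ℚ) * ((n-1).choose i : ℚ) := by
      rw [hB]
      push_cast
      apply Finset.sum_congr rfl
      intro i _
      ring
    rw [hcast, swap_sum (I.sup id) (n-1) (fun i => (bcoef I i : ℚ))]
    have hn1 : n - 1 + 1 = n := by omega
    rw [hn1]
  have hzero : ∀ n : ℕ, 1 ≤ n → ∑ j ∈ Finset.range (I.sup id + 1),
      (c j - ∑ i ∈ Finset.Icc j (I.sup id), (-1:ℚ)^(i-j) * (bcoef I i : ℚ)) * (n.choose j : ℚ)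
        = 0 := by
    intro n hn
    simp only [sub_mul, Finset.sum_sub_distrib]
    rw [← hc n hn, ← hNd n hn, sub_self]
  have := uniq (I.sup id)
    (fun j => c j - ∑ i ∈ Finset.Icc j (I.sup id), (-1:ℚ)^(i-j) * (bcoef I i : ℚ))
    hzero k hk
  have hck : c k = ∑ i ∈ Finset.Icc k (I.sup id), (-1:ℚ)^(i-k) * (bcoef I i : ℚ) := by
    linarith [this]
  rw [hck]
  push_cast
  rfl
end

section
/- For every integer i with 0 ≤ i ≤ L, c_i(I) = (−1)^{i+t}. -/
open Finset

lemma ncard_biUnion {α β : Type*} (s : Finset β) (A : β → Set α)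
    (hfin : ∀ b ∈ s, (A b).Finite)
    (hdisj : ∀ b ∈ s, ∀ b' ∈ s, b ≠ b' → Disjoint (A b) (A b')) :
    (⋃ b ∈ s, A b).ncard = ∑ b ∈ s, (A b).ncard := by
  classical
  induction s using Finset.induction with
  | empty => simp
  | @insert b s hb ih =>
    rw [Finset.sum_insert hb]
    have hU : (⋃ x ∈ insert b s, A x) = A b ∪ ⋃ x ∈ s, A x := by
      simp [Set.iUnion_iUnion_eq_or_left]
    have hdis : Disjoint (A b) (⋃ x ∈ s, A x) := by
      refine Set.disjoint_iUnion₂_right.mpr (fun x hx => ?_)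
      exact hdisj b (mem_insert_self b s) x (mem_insert_of_mem hx) (by rintro rfl; exact hb hx)
    rw [hU, Set.ncard_union_eq hdis (hfin b (mem_insert_self b s))
      (Set.Finite.biUnion s.finite_toSet (fun x hx => hfin x (mem_insert_of_mem hx)))]
    rw [ih (fun x hx => hfin x (mem_insert_of_mem hx))
      (fun x hx y hy hxy => hdisj x (mem_insert_of_mem hx) y (mem_insert_of_mem hy) hxy)]

lemma binom_unique (m : ℕ) (d : ℕ → ℚ)
    (h : ∀ n : ℕ, 1 ≤ n → ∑ i ∈ Finset.range m, d i * (n.choose i : ℚ) = 0) :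
    ∀ i < m, d i = 0 := by
  induction m generalizing d with
  | zero => intro i hi; omega
  | succ m ih =>
    have hdiff : ∀ n : ℕ, 1 ≤ n →
        ∑ i ∈ Finset.range m, d (i + 1) * (n.choose i : ℚ) = 0 := by
      intro n hn
      have hA := h n hn
      have hB := h (n + 1) (by omega)
      rw [Finset.sum_range_succ' (fun i => d i * ((n+1).choose i : ℚ)) m] at hB
      rw [Finset.sum_range_succ' (fun i => d i * (n.choose i : ℚ)) m] at hA
      simp only [Nat.choose_succ_succ, Nat.cast_add, Nat.choose_zero_right] at hB hA
      have : ∑ i ∈ Finset.range m, d (i+1) * ((n.choose i : ℚ) + (n.choose (i+1) : ℚ))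
          = ∑ i ∈ Finset.range m, d (i+1) * (n.choose i : ℚ)
            + ∑ i ∈ Finset.range m, d (i+1) * (n.choose (i+1) : ℚ) := by
        rw [← Finset.sum_add_distrib]; exact Finset.sum_congr rfl (fun i _ => by ring)
      rw [this] at hB
      have := sub_eq_zero.mpr (hB.trans hA.symm)
      linarith [this]
    have h1 : ∀ i < m, d (i + 1) = 0 := ih (fun i => d (i + 1)) hdiff
    intro i hi
    match i with
    | (i + 1) => exact h1 i (by omega)
    | 0 =>
      have := h 1 le_rfl
      rw [Finset.sum_range_succ' (fun i => d i * ((1:ℕ).choose i : ℚ)) m] at this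
      have hz : ∑ i ∈ Finset.range m, d (i+1) * (((1:ℕ).choose (i+1) : ℕ) : ℚ) = 0 := by
        refine Finset.sum_eq_zero (fun i hi => ?_)
        rw [h1 i (Finset.mem_range.mp hi)]; ring
      rw [hz] at this; simpa using this

lemma sum_alt_choose (n k : ℕ) (hn : 1 ≤ n) :
    ∑ i ∈ Finset.range (k + 1), (-1 : ℚ) ^ (k - i) * (n.choose i : ℚ)
      = ((n - 1).choose k : ℚ) := by
  induction k with
  | zero => simp
  | succ k ihk =>
    rw [Finset.sum_range_succ]
    have hre : ∑ i ∈ Finset.range (k + 1), (-1 : ℚ) ^ (k + 1 - i) * (n.choose i : ℚ)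
        = -∑ i ∈ Finset.range (k + 1), (-1 : ℚ) ^ (k - i) * (n.choose i : ℚ) := by
      rw [← Finset.sum_neg_distrib]
      refine Finset.sum_congr rfl (fun i hi => ?_)
      have hik : i ≤ k := Nat.lt_succ_iff.mp (Finset.mem_range.mp hi)
      rw [show k + 1 - i = (k - i) + 1 by omega]
      ring
    rw [hre, ihk]
    have hnn : n = (n - 1) + 1 := by omega
    rw [show n.choose (k+1) = (n-1).choose k + (n-1).choose (k+1) by
      conv_lhs => rw [hnn]
      exact Nat.choose_succ_succ (n-1) k]
    push_cast
    simp only [Nat.sub_self, pow_zero]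
    ring

lemma des_mem_iff {ℓ : ℕ} {v : ℕ → ℕ} {D : Finset ℕ} (h : Des ℓ v = ↑D) (x : ℕ) :
    x ∈ D ↔ 1 ≤ x ∧ x < ℓ ∧ v (x + 1) < v x := by
  have := Set.ext_iff.mp h x
  simp only [Des, Set.mem_setOf_eq, Finset.mem_coe] at this
  exact this.symm

lemma longestRun_spec {I : Finset ℕ} (hI : I.Nonempty) :
    ∃ a ∈ I, 1 ≤ longestRun I ∧ Finset.Icc a (a + (longestRun I - 1)) ⊆ I := by
  classical
  obtain ⟨a, ha, hval⟩ := Finset.exists_mem_eq_sup I hI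
    (fun a => ((Finset.Icc a (I.sup id)).filter fun b => Finset.Icc a b ⊆ I).card)
  have hval' : longestRun I
      = ((Finset.Icc a (I.sup id)).filter fun b => Finset.Icc a b ⊆ I).card := hval
  set P := ((Finset.Icc a (I.sup id)).filter fun b => Finset.Icc a b ⊆ I) with hP
  have haP : a ∈ P := by
    simp only [hP, Finset.mem_filter, Finset.mem_Icc]
    refine ⟨⟨le_refl a, Finset.le_sup (f := id) ha⟩, ?_⟩
    intro x hx
    rw [Finset.mem_Icc] at hx
    have : x = a := le_antisymm hx.2 hx.1
    rwa [this]
  have hPne : P.Nonempty := ⟨a, haP⟩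
  set M := P.max' hPne with hM
  have hMP : M ∈ P := P.max'_mem hPne
  have hMI : Finset.Icc a M ⊆ I := (Finset.mem_filter.mp hMP).2
  have haM : a ≤ M := P.le_max' a haP
  have hsub : P ⊆ Finset.Icc a M := by
    intro b hb
    rw [Finset.mem_Icc]
    exact ⟨(Finset.mem_Icc.mp (Finset.mem_filter.mp hb).1).1, P.le_max' b hb⟩
  have hsub2 : Finset.Icc a M ⊆ P := by
    intro b hb
    rw [Finset.mem_Icc] at hb
    simp only [hP, Finset.mem_filter, Finset.mem_Icc]
    refine ⟨⟨hb.1, le_trans hb.2 (Finset.mem_Icc.mp (Finset.mem_filter.mp hMP).1).2⟩, ?_⟩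
    exact fun x hx => hMI (Finset.mem_Icc.mp hx |> fun h => Finset.mem_Icc.mpr ⟨h.1, le_trans h.2 hb.2⟩)
  have hPeq : P = Finset.Icc a M := le_antisymm hsub hsub2
  have hcard : P.card = M - a + 1 := by rw [hPeq, Nat.card_Icc]; omega
  have hLval : longestRun I = M - a + 1 := by rw [hval', hcard]
  refine ⟨a, ha, by omega, ?_⟩
  have : a + (longestRun I - 1) = M := by omega
  rw [this]; exact hMI

lemma bcoef_eq_zero {I : Finset ℕ} (hI : I.Nonempty) (hIpos : ∀ x ∈ I, 1 ≤ x)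
    {k : ℕ} (hk : k < longestRun I) : bcoef I k = 0 := by
  classical
  obtain ⟨a, ha, hL1, hrun⟩ := longestRun_spec hI
  have ha1 : 1 ≤ a := hIpos a ha
  have haℓ : a ≤ I.sup id := Finset.le_sup (f := id) ha
  set L := longestRun I with hLdef
  set M := a + (L - 1) with hMdef
  have hMℓ : M ≤ I.sup id :=
    Finset.le_sup (f := id) (hrun (Finset.mem_Icc.mpr ⟨by omega, le_refl M⟩))
  rw [bcoef]
  have hfin : {v ∈ Seqs (I.sup id) (k + 1) |
      Des (I.sup id) v = ↑(I.erase (I.sup id)) ∧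
      (∀ l ∈ Finset.Icc 2 (k + 1), ∃ j ∈ Finset.Icc 1 (I.sup id), v j = l) ∧
      v (I.sup id) ≠ 1}.Finite :=
    Set.Finite.subset (seqs_finite _ _) (fun v hv => hv.1)
  rw [Set.ncard_eq_zero hfin]
  rw [Set.eq_empty_iff_forall_notMem]
  rintro v ⟨⟨hv1, hv2⟩, hdes, honto, hlast⟩
  have hchain : ∀ d, a + d ≤ M + 1 → a + d ≤ I.sup id → v (a + d) + d ≤ v a := by
    intro d
    induction d with
    | zero => intro _ _; simp
    | succ d ihd =>
      intro hd1 hd2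
      have hjI : a + d ∈ I.erase (I.sup id) := by
        refine Finset.mem_erase.mpr ⟨by omega, hrun (Finset.mem_Icc.mpr ⟨by omega, by omega⟩)⟩
      have hlt : v (a + d + 1) < v (a + d) := ((des_mem_iff hdes (a + d)).mp hjI).2.2
      have hprev : v (a + d) + d ≤ v a := ihd (by omega) (by omega)
      show v (a + d + 1) + (d + 1) ≤ v a
      omega
  have hva : v a ≤ k + 1 :=
    (Finset.mem_Icc.mp (hv1 a (Finset.mem_Icc.mpr ⟨ha1, haℓ⟩))).2
  by_cases hcase : M < I.sup id
  · have h1 : v (M + 1) + (M + 1 - a) ≤ v a := by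
      have := hchain (M + 1 - a) (by omega) (by omega)
      have heq : a + (M + 1 - a) = M + 1 := by omega
      rwa [heq] at this
    have h2 : 1 ≤ v (M + 1) :=
      (Finset.mem_Icc.mp (hv1 (M + 1) (Finset.mem_Icc.mpr ⟨by omega, by omega⟩))).1
    omega
  · have hMeq : M = I.sup id := by omega
    have h1 : v (I.sup id) + (I.sup id - a) ≤ v a := by
      have := hchain (I.sup id - a) (by omega) (by omega)
      have heq : a + (I.sup id - a) = I.sup id := by omega
      rwa [heq] at this
    have hv2' : 2 ≤ v (I.sup id) := by
      have := (Finset.mem_Icc.mp (hv1 (I.sup id) (Finset.mem_Icc.mpr ⟨by omega, le_refl _⟩))).1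
      omega
    omega

section Relabel
variable {S : Finset ℕ} {n : ℕ}

/-- Order-preserving relabeling sending `{1} ∪ S` to `{1, …, S.card + 1}`. -/
def sig (S : Finset ℕ) : ℕ → ℕ := fun x =>
  if x = 0 then 0 else 1 + (S.filter (· ≤ x)).card

lemma sig_zero : sig S 0 = 0 := by simp [sig]

lemma sig_one (hS : S ⊆ Finset.Icc 2 n) : sig S 1 = 1 := by
  have : S.filter (· ≤ 1) = ∅ := by
    rw [Finset.filter_eq_empty_iff]
    intro x hx
    have := (Finset.mem_Icc.mp (hS hx)).1
    omega
  simp [sig, this]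

lemma sig_mem (hS : S ⊆ Finset.Icc 2 n) {x : ℕ} (hx : x ∈ S) :
    sig S x ∈ Finset.Icc 2 (S.card + 1) := by
  have hx2 : 2 ≤ x := (Finset.mem_Icc.mp (hS hx)).1
  have h1 : 1 ≤ (S.filter (· ≤ x)).card := by
    rw [Nat.one_le_iff_ne_zero, ← Nat.pos_iff_ne_zero, Finset.card_pos]
    exact ⟨x, Finset.mem_filter.mpr ⟨hx, le_refl x⟩⟩
  have h2 : (S.filter (· ≤ x)).card ≤ S.card := Finset.card_le_card (Finset.filter_subset _ _)
  simp only [sig, if_neg (by omega : ¬ x = 0)]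
  rw [Finset.mem_Icc]; omega

lemma sig_lt (hS : S ⊆ Finset.Icc 2 n) {x y : ℕ} (hx : x = 1 ∨ x ∈ S) (hy : y ∈ S)
    (hxy : x < y) : sig S x < sig S y := by
  rcases hx with rfl | hx
  · have := sig_mem hS hy
    rw [Finset.mem_Icc] at this
    rw [sig_one hS]; omega
  · have hx0 : x ≠ 0 := by have := (Finset.mem_Icc.mp (hS hx)).1; omega
    have hy0 : y ≠ 0 := by have := (Finset.mem_Icc.mp (hS hy)).1; omega
    simp only [sig, if_neg hx0, if_neg hy0]
    have hsub : S.filter (· ≤ x) ⊆ S.filter (· ≤ y) :=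
      Finset.monotone_filter_right S (fun z _ (hz : z ≤ x) => by omega)
    have hss : S.filter (· ≤ x) ⊂ S.filter (· ≤ y) := by
      refine (Finset.ssubset_iff_of_subset hsub).mpr ?_
      refine ⟨y, Finset.mem_filter.mpr ⟨hy, le_refl y⟩, ?_⟩
      rw [Finset.mem_filter]; push_neg; intro _; omega
    have := Finset.card_lt_card hss
    omega

lemma sig_lt_iff (hS : S ⊆ Finset.Icc 2 n) {x y : ℕ} (hx : x = 1 ∨ x ∈ S)
    (hy : y = 1 ∨ y ∈ S) : x < y ↔ sig S x < sig S y := by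
  have hx1 : 1 ≤ x := by
    rcases hx with rfl | hx
    · omega
    · have := (Finset.mem_Icc.mp (hS hx)).1; omega
  have hy1 : 1 ≤ y := by
    rcases hy with rfl | hy
    · omega
    · have := (Finset.mem_Icc.mp (hS hy)).1; omega
  constructor
  · intro h
    rcases hy with rfl | hy
    · omega
    · exact sig_lt hS hx hy h
  · intro h
    by_contra hc
    push_neg at hc
    rcases Nat.lt_or_ge y x with h' | h'
    · rcases hx with rfl | hx
      · omega
      · exact absurd (sig_lt hS hy hx h') (by omega)
    · have : x = y := by omega
      subst this; omega

lemma sig_inj (hS : S ⊆ Finset.Icc 2 n) {x y : ℕ} (hx : x = 1 ∨ x ∈ S)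
    (hy : y = 1 ∨ y ∈ S) (h : sig S x = sig S y) : x = y := by
  rcases Nat.lt_trichotomy x y with h' | h' | h'
  · exact absurd ((sig_lt_iff hS hx hy).mp h') (by omega)
  · exact h'
  · exact absurd ((sig_lt_iff hS hy hx).mp h') (by omega)

lemma sig_surj (hS : S ⊆ Finset.Icc 2 n) :
    ∀ m ∈ Finset.Icc 2 (S.card + 1), ∃ x ∈ S, sig S x = m := by
  classical
  intro m hm
  have himg : S.image (sig S) = Finset.Icc 2 (S.card + 1) := by
    apply Finset.eq_of_subset_of_card_le
    · intro y hy
      obtain ⟨x, hx, rfl⟩ := Finset.mem_image.mp hy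
      exact sig_mem hS hx
    · rw [Finset.card_image_of_injOn (fun x hx y hy h => sig_inj hS (Or.inr hx) (Or.inr hy) h)]
      rw [Nat.card_Icc]; omega
  rw [← himg] at hm
  obtain ⟨x, hx, hxe⟩ := Finset.mem_image.mp hm
  exact ⟨x, hx, hxe⟩

/-- Inverse relabeling. -/
noncomputable def tau (S : Finset ℕ) : ℕ → ℕ := fun m =>
  if m ≤ 1 then m else if h : ∃ x ∈ S, sig S x = m then h.choose else 0

lemma tau_le_one {m : ℕ} (hm : m ≤ 1) : tau S m = m := by simp [tau, hm]

lemma tau_spec (hS : S ⊆ Finset.Icc 2 n) {m : ℕ} (hm : m ∈ Finset.Icc 2 (S.card + 1)) :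
    tau S m ∈ S ∧ sig S (tau S m) = m := by
  have h : ∃ x ∈ S, sig S x = m := sig_surj hS m hm
  have hm2 : ¬ m ≤ 1 := by have := (Finset.mem_Icc.mp hm).1; omega
  simp only [tau, if_neg hm2, dif_pos h]
  exact h.choose_spec

lemma tau_sig (hS : S ⊆ Finset.Icc 2 n) {x : ℕ} (hx : x ∈ S) : tau S (sig S x) = x := by
  have h := tau_spec hS (sig_mem hS hx)
  exact sig_inj hS (Or.inr h.1) (Or.inr hx) h.2

end Relabel

lemma des_transfer {ℓ : ℕ} {n : ℕ} {S : Finset ℕ} (hS : S ⊆ Finset.Icc 2 n)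
    (v : ℕ → ℕ) (hv : ∀ i ∈ Finset.Icc 1 ℓ, v i = 1 ∨ v i ∈ S) :
    Des ℓ (fun i => sig S (v i)) = Des ℓ v := by
  ext x
  simp only [Des, Set.mem_setOf_eq]
  constructor
  · rintro ⟨h1, h2, h3⟩
    refine ⟨h1, h2, ?_⟩
    exact (sig_lt_iff hS (hv (x+1) (Finset.mem_Icc.mpr ⟨by omega, by omega⟩))
      (hv x (Finset.mem_Icc.mpr ⟨h1, by omega⟩))).mpr h3
  · rintro ⟨h1, h2, h3⟩
    refine ⟨h1, h2, ?_⟩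
    exact (sig_lt_iff hS (hv (x+1) (Finset.mem_Icc.mpr ⟨by omega, by omega⟩))
      (hv x (Finset.mem_Icc.mpr ⟨h1, by omega⟩))).mp h3

lemma card_AS {I : Finset ℕ} (hI : I.Nonempty) (hIpos : ∀ x ∈ I, 1 ≤ x)
    {n : ℕ} (hn : 1 ≤ n) {S : Finset ℕ} (hS : S ⊆ Finset.Icc 2 n) :
    ({v ∈ Seqs (I.sup id) n | Des (I.sup id) v = ↑(I.erase (I.sup id)) ∧ v (I.sup id) ≠ 1}
      ∩ {v | (∀ i ∈ Finset.Icc 1 (I.sup id), v i = 1 ∨ v i ∈ S) ∧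
             ∀ x ∈ S, ∃ i ∈ Finset.Icc 1 (I.sup id), v i = x}).ncard = bcoef I S.card := by
  classical
  have hℓ1 : 1 ≤ I.sup id := by
    obtain ⟨a, ha⟩ := hI
    exact le_trans (hIpos a ha) (Finset.le_sup (f := id) ha)
  set ℓ := I.sup id with hℓ
  set k := S.card with hk
  set A := ({v ∈ Seqs ℓ n | Des ℓ v = ↑(I.erase ℓ) ∧ v ℓ ≠ 1}
      ∩ {v | (∀ i ∈ Finset.Icc 1 ℓ, v i = 1 ∨ v i ∈ S) ∧
             ∀ x ∈ S, ∃ i ∈ Finset.Icc 1 ℓ, v i = x}) with hA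
  set F := fun (v : ℕ → ℕ) (i : ℕ) => sig S (v i) with hF
  have hinj : Set.InjOn F A := by
    rintro v ⟨⟨hv1, hdes, hlast⟩, hc1, hc2⟩ v' ⟨⟨hv1', hdes', hlast'⟩, hc1', hc2'⟩ heq
    funext i
    by_cases hi : i ∈ Finset.Icc 1 ℓ
    · have h1 := hc1 i hi
      have h2 := hc1' i hi
      have := congrFun heq i
      exact sig_inj hS h1 h2 this
    · rw [hv1.2 i hi, hv1'.2 i hi]
  have himg : F '' A = {v ∈ Seqs ℓ (k + 1) | Des ℓ v = ↑(I.erase ℓ) ∧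
      (∀ l ∈ Finset.Icc 2 (k + 1), ∃ j ∈ Finset.Icc 1 ℓ, v j = l) ∧ v ℓ ≠ 1} := by
    apply Set.eq_of_subset_of_subset
    · rintro w ⟨v, ⟨⟨⟨hv1, hv2⟩, hdes, hlast⟩, hc1, hc2⟩, rfl⟩
      refine ⟨⟨?_, ?_⟩, ?_, ?_, ?_⟩
      · intro i hi
        rcases hc1 i hi with h | h
        · rw [Finset.mem_Icc]
          simp only [hF, h, sig_one hS]
          omega
        · have := Finset.mem_Icc.mp (sig_mem hS h)
          show sig S (v i) ∈ Finset.Icc 1 (k + 1)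
          rw [Finset.mem_Icc]
          exact ⟨by omega, by omega⟩
      · intro i hi
        simp only [hF, hv2 i hi, sig_zero]
      · rw [hF]
        rw [des_transfer hS v hc1]
        exact hdes
      · intro l hl
        obtain ⟨x, hx, hxl⟩ := sig_surj hS l hl
        obtain ⟨i, hi, hvi⟩ := hc2 x hx
        exact ⟨i, hi, by simp only [hF, hvi, hxl]⟩
      · have hvℓ : v ℓ ∈ S := by
          rcases hc1 ℓ (Finset.mem_Icc.mpr ⟨hℓ1, le_refl ℓ⟩) with h | h
          · exact absurd h hlast
          · exact h
        have := Finset.mem_Icc.mp (sig_mem hS hvℓ)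
        simp only [hF]
        omega
    · rintro w ⟨⟨hw1, hw2⟩, hdes, honto, hlast⟩
      have hc1 : ∀ i ∈ Finset.Icc 1 ℓ, tau S (w i) = 1 ∨ tau S (w i) ∈ S := by
        intro i hi
        have hwi := Finset.mem_Icc.mp (hw1 i hi)
        by_cases h1 : w i = 1
        · left; rw [h1, tau_le_one (by omega)]
        · right
          exact (tau_spec hS (Finset.mem_Icc.mpr ⟨by omega, hwi.2⟩)).1
      have hFv : (fun i => sig S (tau S (w i))) = w := by
        funext i
        by_cases hi : i ∈ Finset.Icc 1 ℓ
        · have hwi := Finset.mem_Icc.mp (hw1 i hi)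
          by_cases h1 : w i = 1
          · rw [h1, tau_le_one (by omega), sig_one hS]
          · exact (tau_spec hS (Finset.mem_Icc.mpr ⟨by omega, hwi.2⟩)).2
        · rw [hw2 i hi, tau_le_one (by omega), sig_zero]
      refine ⟨fun i => tau S (w i), ⟨⟨⟨?_, ?_⟩, ?_, ?_⟩, hc1, ?_⟩, hFv⟩
      · intro i hi
        show tau S (w i) ∈ Finset.Icc 1 n
        rcases hc1 i hi with h | h
        · rw [h, Finset.mem_Icc]; omega
        · have := Finset.mem_Icc.mp (hS h)
          rw [Finset.mem_Icc]; omega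
      · intro i hi
        show tau S (w i) = 0
        rw [hw2 i hi, tau_le_one (by omega)]
      · have := des_transfer hS (fun i => tau S (w i)) hc1
        rw [show (fun i => sig S (tau S (w i))) = w from hFv] at this
        rw [← this]
        exact hdes
      · intro h
        apply hlast
        have h2 := congrFun hFv ℓ
        have h3 : tau S (w ℓ) = 1 := h
        rw [h3, sig_one hS] at h2
        exact h2.symm
      · intro x hx
        obtain ⟨i, hi, hwi⟩ := honto (sig S x) (sig_mem hS hx)
        refine ⟨i, hi, ?_⟩
        show tau S (w i) = x
        rw [hwi, tau_sig hS hx]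
  rw [bcoef, ← hℓ, ← himg, Set.ncard_image_of_injOn hinj]

lemma bcoef_eq_zero_of_lt {I : Finset ℕ} {k : ℕ} (h : I.sup id < k) : bcoef I k = 0 := by
  classical
  rw [bcoef]
  have hfin : {v ∈ Seqs (I.sup id) (k + 1) |
      Des (I.sup id) v = ↑(I.erase (I.sup id)) ∧
      (∀ l ∈ Finset.Icc 2 (k + 1), ∃ j ∈ Finset.Icc 1 (I.sup id), v j = l) ∧
      v (I.sup id) ≠ 1}.Finite :=
    Set.Finite.subset (seqs_finite _ _) (fun v hv => hv.1)
  rw [Set.ncard_eq_zero hfin, Set.eq_empty_iff_forall_notMem]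
  rintro v ⟨hv1, hdes, honto, hlast⟩
  have hsub : Finset.Icc 2 (k + 1) ⊆ (Finset.Icc 1 (I.sup id)).image v := by
    intro l hl
    obtain ⟨j, hj, hvj⟩ := honto l hl
    exact Finset.mem_image.mpr ⟨j, hj, hvj⟩
  have h1 := Finset.card_le_card hsub
  have h2 := Finset.card_image_le (s := Finset.Icc 1 (I.sup id)) (f := v)
  rw [Nat.card_Icc] at h1 h2
  omega

lemma Ncount_expand {I : Finset ℕ} (hI : I.Nonempty) (hIpos : ∀ x ∈ I, 1 ≤ x)
    {n : ℕ} (hn : 1 ≤ n) :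
    Ncount I n = ∑ k ∈ Finset.range (I.sup id + 1), (n - 1).choose k * bcoef I k := by
  classical
  have hℓ1 : 1 ≤ I.sup id := by
    obtain ⟨a, ha⟩ := hI
    exact le_trans (hIpos a ha) (Finset.le_sup (f := id) ha)
  set ℓ := I.sup id with hℓ
  set A := fun (S : Finset ℕ) =>
    ({v ∈ Seqs ℓ n | Des ℓ v = ↑(I.erase ℓ) ∧ v ℓ ≠ 1}
      ∩ {v | (∀ i ∈ Finset.Icc 1 ℓ, v i = 1 ∨ v i ∈ S) ∧
             ∀ x ∈ S, ∃ i ∈ Finset.Icc 1 ℓ, v i = x}) with hAdef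
  have hcover : {v ∈ Seqs ℓ n | Des ℓ v = ↑(I.erase ℓ) ∧ v ℓ ≠ 1}
      = ⋃ S ∈ (Finset.Icc 2 n).powerset, A S := by
    apply Set.eq_of_subset_of_subset
    · intro v hv
      have hpow : ((Finset.Icc 1 ℓ).image v).filter (2 ≤ ·) ∈ (Finset.Icc 2 n).powerset := by
        rw [Finset.mem_powerset]
        intro x hx
        rw [Finset.mem_filter, Finset.mem_image] at hx
        obtain ⟨⟨i, hi, rfl⟩, h2⟩ := hx
        exact Finset.mem_Icc.mpr ⟨h2, (Finset.mem_Icc.mp (hv.1.1 i hi)).2⟩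
      refine Set.mem_iUnion₂.mpr ⟨((Finset.Icc 1 ℓ).image v).filter (2 ≤ ·), hpow, hv, ?_, ?_⟩
      · intro i hi
        have hvi := Finset.mem_Icc.mp (hv.1.1 i hi)
        by_cases h1 : v i = 1
        · exact Or.inl h1
        · refine Or.inr (Finset.mem_filter.mpr ⟨Finset.mem_image.mpr ⟨i, hi, rfl⟩, by omega⟩)
      · intro x hx
        rw [Finset.mem_filter, Finset.mem_image] at hx
        obtain ⟨⟨i, hi, rfl⟩, _⟩ := hx
        exact ⟨i, hi, rfl⟩
    · intro v hv
      obtain ⟨S, _, hvS⟩ := Set.mem_iUnion₂.mp hv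
      exact hvS.1
  have hN : Ncount I n = (⋃ S ∈ (Finset.Icc 2 n).powerset, A S).ncard := by
    rw [Ncount, ← hcover]
  rw [hN, ncard_biUnion]
  · have hstep : ∀ S ∈ (Finset.Icc 2 n).powerset, (A S).ncard = bcoef I S.card := by
      intro S hSmem
      exact card_AS hI hIpos hn (Finset.mem_powerset.mp hSmem)
    rw [Finset.sum_congr rfl hstep]
    rw [Finset.sum_powerset (Finset.Icc 2 n) (fun t => bcoef I t.card)]
    have hinner : ∀ j ∈ Finset.range ((Finset.Icc 2 n).card + 1),
        ∑ t ∈ Finset.powersetCard j (Finset.Icc 2 n), bcoef I t.card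
          = (n - 1).choose j * bcoef I j := by
      intro j _
      have : ∀ t ∈ Finset.powersetCard j (Finset.Icc 2 n), bcoef I t.card = bcoef I j := by
        intro t ht
        rw [(Finset.mem_powersetCard.mp ht).2]
      rw [Finset.sum_congr rfl this, Finset.sum_const, Finset.card_powersetCard, smul_eq_mul,
        Nat.card_Icc]
      have : n + 1 - 2 = n - 1 := by omega
      rw [this]
    rw [Finset.sum_congr rfl hinner]
    have hcard2n : (Finset.Icc 2 n).card = n - 1 := by rw [Nat.card_Icc]; omega
    rw [hcard2n]
    -- extend both sums to range (n + ℓ + 1)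
    have hbig1 : ∑ k ∈ Finset.range (n - 1 + 1), (n - 1).choose k * bcoef I k
        = ∑ k ∈ Finset.range (n + ℓ + 1), (n - 1).choose k * bcoef I k := by
      apply Finset.sum_subset
      · intro x hx; rw [Finset.mem_range] at *; omega
      · intro x _ hx
        rw [Finset.mem_range] at hx
        rw [Nat.choose_eq_zero_of_lt (by omega)]
        ring
    have hbig2 : ∑ k ∈ Finset.range (ℓ + 1), (n - 1).choose k * bcoef I k
        = ∑ k ∈ Finset.range (n + ℓ + 1), (n - 1).choose k * bcoef I k := by
      apply Finset.sum_subset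
      · intro x hx; rw [Finset.mem_range] at *; omega
      · intro x _ hx
        rw [Finset.mem_range] at hx
        rw [bcoef_eq_zero_of_lt (by omega)]
        ring
    rw [hbig1, ← hbig2]
  · intro S _
    exact Set.Finite.subset (seqs_finite ℓ n) (fun v hv => hv.1.1)
  · intro S hSm S' hSm' hne
    rw [Set.disjoint_left]
    rintro v ⟨_, hc1, hc2⟩ ⟨_, hc1', hc2'⟩
    apply hne
    apply Finset.Subset.antisymm
    · intro x hx
      obtain ⟨i, hi, hvi⟩ := hc2 x hx
      rcases hc1' i hi with h | h
      · have hx2 := (Finset.mem_Icc.mp (Finset.mem_powerset.mp hSm hx)).1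
        omega
      · rwa [← hvi]
    · intro x hx
      obtain ⟨i, hi, hvi⟩ := hc2' x hx
      rcases hc1 i hi with h | h
      · have hx2 := (Finset.mem_Icc.mp (Finset.mem_powerset.mp hSm' hx)).1
        omega
      · rwa [← hvi]

lemma sup_mem {I : Finset ℕ} (hI : I.Nonempty) : I.sup id ∈ I := by
  obtain ⟨a, ha, he⟩ := Finset.exists_mem_eq_sup I hI id
  rw [he]; exact ha

lemma finite_subset_seqs {ℓ n : ℕ} {X : Set (ℕ → ℕ)} (h : X ⊆ Seqs ℓ n) : X.Finite :=
  (seqs_finite ℓ n).subset h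

/-- words of length `ℓ` surjective onto `{1,…,j}` with descent set `I \ {max I}`. -/
noncomputable def uN (I : Finset ℕ) (j : ℕ) : ℕ :=
  Set.ncard {v ∈ Seqs (I.sup id) j | Des (I.sup id) v = ↑(I.erase (I.sup id)) ∧
    ∀ l ∈ Finset.Icc 1 j, ∃ i ∈ Finset.Icc 1 (I.sup id), v i = l}

/-- the same but with last letter equal to `1`. -/
noncomputable def wN (I : Finset ℕ) (j : ℕ) : ℕ :=
  Set.ncard {v ∈ Seqs (I.sup id) j | Des (I.sup id) v = ↑(I.erase (I.sup id)) ∧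
    (∀ l ∈ Finset.Icc 1 j, ∃ i ∈ Finset.Icc 1 (I.sup id), v i = l) ∧ v (I.sup id) = 1}

lemma uN_zero {I : Finset ℕ} (hI : I.Nonempty) (hIpos : ∀ x ∈ I, 1 ≤ x) : uN I 0 = 0 := by
  have hℓ1 : 1 ≤ I.sup id := by
    obtain ⟨a, ha⟩ := hI
    exact le_trans (hIpos a ha) (Finset.le_sup (f := id) ha)
  rw [uN, Set.ncard_eq_zero (finite_subset_seqs (fun v hv => hv.1)),
    Set.eq_empty_iff_forall_notMem]
  rintro v ⟨⟨hv1, _⟩, _, _⟩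
  have := Finset.mem_Icc.mp (hv1 1 (Finset.mem_Icc.mpr ⟨le_refl 1, hℓ1⟩))
  omega

lemma uN_eq_zero_of_lt {I : Finset ℕ} {j : ℕ} (h : I.sup id < j) : uN I j = 0 := by
  classical
  rw [uN, Set.ncard_eq_zero (finite_subset_seqs (fun v hv => hv.1)),
    Set.eq_empty_iff_forall_notMem]
  rintro v ⟨hv1, _, honto⟩
  have hsub : Finset.Icc 1 j ⊆ (Finset.Icc 1 (I.sup id)).image v := by
    intro l hl
    obtain ⟨i, hi, hvi⟩ := honto l hl
    exact Finset.mem_image.mpr ⟨i, hi, hvi⟩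
  have h1 := Finset.card_le_card hsub
  have h2 := Finset.card_image_le (s := Finset.Icc 1 (I.sup id)) (f := v)
  rw [Nat.card_Icc] at h1 h2
  omega

lemma wN_le_uN (I : Finset ℕ) (j : ℕ) : wN I j ≤ uN I j := by
  apply Set.ncard_le_ncard
  · rintro v ⟨h1, h2, h3, _⟩
    exact ⟨h1, h2, h3⟩
  · exact finite_subset_seqs (fun v hv => hv.1)

lemma bcoef_split {I : Finset ℕ} (hI : I.Nonempty) (hIpos : ∀ x ∈ I, 1 ≤ x) (k : ℕ) :
    bcoef I k + wN I (k + 1) = uN I (k + 1) + uN I k := by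
  classical
  have hℓ1 : 1 ≤ I.sup id := by
    obtain ⟨a, ha⟩ := hI
    exact le_trans (hIpos a ha) (Finset.le_sup (f := id) ha)
  set ℓ := I.sup id with hℓ
  set B : Set (ℕ → ℕ) := {v ∈ Seqs ℓ (k + 1) | Des ℓ v = ↑(I.erase ℓ) ∧
    (∀ l ∈ Finset.Icc 2 (k + 1), ∃ j ∈ Finset.Icc 1 ℓ, v j = l) ∧ v ℓ ≠ 1} with hB
  have hbc : bcoef I k = B.ncard := rfl
  set H : Set (ℕ → ℕ) := {v | ∃ i ∈ Finset.Icc 1 ℓ, v i = 1} with hH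
  -- part 1 : B ∩ H = uSet (k+1) \ wSet (k+1)
  have hpart1 : B ∩ H = {v ∈ Seqs ℓ (k+1) | Des ℓ v = ↑(I.erase ℓ) ∧
      ∀ l ∈ Finset.Icc 1 (k+1), ∃ i ∈ Finset.Icc 1 ℓ, v i = l}
      \ {v ∈ Seqs ℓ (k+1) | Des ℓ v = ↑(I.erase ℓ) ∧
      (∀ l ∈ Finset.Icc 1 (k+1), ∃ i ∈ Finset.Icc 1 ℓ, v i = l) ∧ v ℓ = 1} := by
    ext v
    constructor
    · rintro ⟨⟨hv1, hdes, honto, hlast⟩, hone⟩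
      have honto' : ∀ l ∈ Finset.Icc 1 (k+1), ∃ i ∈ Finset.Icc 1 ℓ, v i = l := by
        intro l hl
        rw [Finset.mem_Icc] at hl
        by_cases h1 : l = 1
        · subst h1; exact hone
        · exact honto l (Finset.mem_Icc.mpr ⟨by omega, hl.2⟩)
      exact ⟨⟨hv1, hdes, honto'⟩, by rintro ⟨_, _, _, hl⟩; exact hlast hl⟩
    · rintro ⟨⟨hv1, hdes, honto⟩, hnw⟩
      have hlast : v ℓ ≠ 1 := by
        intro h
        exact hnw ⟨hv1, hdes, honto, h⟩
      refine ⟨⟨hv1, hdes, fun l hl => honto l (by rw [Finset.mem_Icc] at *; omega), hlast⟩, ?_⟩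
      exact honto 1 (Finset.mem_Icc.mpr ⟨le_refl 1, by omega⟩)
  -- part 2 : B \ H ≃ uSet k  (shift values down by one)
  have hpart2 : (B \ H).ncard = uN I k := by
    have hinj : Set.InjOn (fun (v : ℕ → ℕ) (i : ℕ) => v i - 1) (B \ H) := by
      rintro v ⟨⟨⟨hv1, hv2⟩, _⟩, hvH⟩ v' ⟨⟨⟨hv1', hv2'⟩, _⟩, hvH'⟩ heq
      simp only [hH, Set.mem_setOf_eq] at hvH hvH'
      push_neg at hvH hvH'
      funext i
      by_cases hi : i ∈ Finset.Icc 1 ℓ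
      · have a1 := Finset.mem_Icc.mp (hv1 i hi)
        have a2 := Finset.mem_Icc.mp (hv1' i hi)
        have b1 := hvH i hi
        have b2 := hvH' i hi
        have := congrFun heq i
        simp only at this
        omega
      · rw [hv2 i hi, hv2' i hi]
    have himg : (fun (v : ℕ → ℕ) (i : ℕ) => v i - 1) '' (B \ H)
        = {v ∈ Seqs ℓ k | Des ℓ v = ↑(I.erase ℓ) ∧
            ∀ l ∈ Finset.Icc 1 k, ∃ i ∈ Finset.Icc 1 ℓ, v i = l} := by
      apply Set.eq_of_subset_of_subset
      · rintro w ⟨v, ⟨⟨⟨hv1, hv2⟩, hdes, honto, hlast⟩, hvH⟩, rfl⟩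
        simp only [hH, Set.mem_setOf_eq] at hvH
        push_neg at hvH
        have hv2' : ∀ i ∈ Finset.Icc 1 ℓ, 2 ≤ v i ∧ v i ≤ k + 1 := by
          intro i hi
          have := Finset.mem_Icc.mp (hv1 i hi)
          have := hvH i hi
          omega
        refine ⟨⟨?_, ?_⟩, ?_, ?_⟩
        · intro i hi
          have := hv2' i hi
          rw [Finset.mem_Icc]
          show 1 ≤ v i - 1 ∧ v i - 1 ≤ k
          omega
        · intro i hi
          show v i - 1 = 0
          rw [hv2 i hi]
        · ext x
          simp only [Des, Set.mem_setOf_eq]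
          rw [← Set.ext_iff.mp hdes x]
          simp only [Des, Set.mem_setOf_eq]
          constructor
          · rintro ⟨h1, h2, h3⟩
            have := hv2' x (Finset.mem_Icc.mpr ⟨h1, by omega⟩)
            have := hv2' (x+1) (Finset.mem_Icc.mpr ⟨by omega, by omega⟩)
            exact ⟨h1, h2, by omega⟩
          · rintro ⟨h1, h2, h3⟩
            have := hv2' x (Finset.mem_Icc.mpr ⟨h1, by omega⟩)
            have := hv2' (x+1) (Finset.mem_Icc.mpr ⟨by omega, by omega⟩)
            exact ⟨h1, h2, by omega⟩
        · intro l hl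
          rw [Finset.mem_Icc] at hl
          obtain ⟨i, hi, hvi⟩ := honto (l + 1) (Finset.mem_Icc.mpr ⟨by omega, by omega⟩)
          refine ⟨i, hi, ?_⟩
          show v i - 1 = l
          omega
      · rintro u ⟨⟨hu1, hu2⟩, hdes, honto⟩
        refine ⟨fun i => if u i = 0 then 0 else u i + 1, ⟨⟨⟨?_, ?_⟩, ?_, ?_, ?_⟩, ?_⟩, ?_⟩
        · intro i hi
          have := Finset.mem_Icc.mp (hu1 i hi)
          show (if u i = 0 then 0 else u i + 1) ∈ Finset.Icc 1 (k+1)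
          rw [if_neg (by omega), Finset.mem_Icc]
          omega
        · intro i hi
          show (if u i = 0 then 0 else u i + 1) = 0
          rw [hu2 i hi]
          rfl
        · ext x
          simp only [Des, Set.mem_setOf_eq]
          rw [← Set.ext_iff.mp hdes x]
          simp only [Des, Set.mem_setOf_eq]
          constructor
          · rintro ⟨h1, h2, h3⟩
            have a1 := Finset.mem_Icc.mp (hu1 x (Finset.mem_Icc.mpr ⟨h1, by omega⟩))
            have a2 := Finset.mem_Icc.mp (hu1 (x+1) (Finset.mem_Icc.mpr ⟨by omega, by omega⟩))
            refine ⟨h1, h2, ?_⟩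
            rw [if_neg (by omega), if_neg (by omega)] at h3
            omega
          · rintro ⟨h1, h2, h3⟩
            have a1 := Finset.mem_Icc.mp (hu1 x (Finset.mem_Icc.mpr ⟨h1, by omega⟩))
            have a2 := Finset.mem_Icc.mp (hu1 (x+1) (Finset.mem_Icc.mpr ⟨by omega, by omega⟩))
            refine ⟨h1, h2, ?_⟩
            rw [if_neg (by omega), if_neg (by omega)]
            omega
        · intro l hl
          rw [Finset.mem_Icc] at hl
          obtain ⟨i, hi, hui⟩ := honto (l - 1) (Finset.mem_Icc.mpr ⟨by omega, by omega⟩)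
          refine ⟨i, hi, ?_⟩
          show (if u i = 0 then 0 else u i + 1) = l
          rw [hui, if_neg (by omega)]
          omega
        · have := Finset.mem_Icc.mp (hu1 ℓ (Finset.mem_Icc.mpr ⟨hℓ1, le_refl ℓ⟩))
          show (if u ℓ = 0 then 0 else u ℓ + 1) ≠ 1
          rw [if_neg (by omega)]
          omega
        · simp only [hH, Set.mem_setOf_eq]
          push_neg
          intro i hi
          have := Finset.mem_Icc.mp (hu1 i hi)
          show (if u i = 0 then 0 else u i + 1) ≠ 1
          rw [if_neg (by omega)]
          omega
        · funext i
          by_cases h0 : u i = 0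
          · simp [h0]
          · simp only [if_neg h0]
            omega
    rw [uN, ← hℓ, ← himg, Set.ncard_image_of_injOn hinj]
  -- assemble
  have hsplit : B.ncard = (B ∩ H).ncard + (B \ H).ncard := by
    rw [← Set.ncard_inter_add_ncard_diff_eq_ncard B H
      (finite_subset_seqs (fun v hv => hv.1))]
  have hle : wN I (k+1) ≤ uN I (k+1) := wN_le_uN I (k+1)
  have hd : (B ∩ H).ncard = uN I (k+1) - wN I (k+1) := by
    rw [hpart1, Set.ncard_diff ?_ (finite_subset_seqs (fun v hv => hv.1))]
    · rfl
    · rintro v ⟨h1, h2, h3, _⟩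
      exact ⟨h1, h2, h3⟩
  rw [hbc, hsplit, hd, hpart2]
  omega

lemma tail_ones {I : Finset ℕ} {v : ℕ → ℕ} {n p : ℕ}
    (hv1 : ∀ i ∈ Finset.Icc 1 (I.sup id), v i ∈ Finset.Icc 1 n)
    (hdes : Des (I.sup id) v = ↑(I.erase (I.sup id)))
    (hlast : v (I.sup id) = 1)
    (hp : ∀ x ∈ I.erase (I.sup id), x ≤ p) :
    ∀ i, p < i → i ≤ I.sup id → v i = 1 := by
  set ℓ := I.sup id with hℓ
  have key : ∀ d i, i = ℓ - d → p < i → v i = 1 := by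
    intro d
    induction d with
    | zero =>
      intro i hi _
      rw [hi, Nat.sub_zero, hlast]
    | succ d ihd =>
      intro i hi hpi
      by_cases hiℓ : i = ℓ
      · rw [hiℓ, hlast]
      · have hiℓ' : i < ℓ := by omega
        have hi1 : 1 ≤ i := by omega
        have hnotmem : i ∉ I.erase ℓ := fun h => by have := hp i h; omega
        have hnd : ¬ (1 ≤ i ∧ i < ℓ ∧ v (i + 1) < v i) :=
          fun h => hnotmem ((des_mem_iff hdes i).mpr h)
        push_neg at hnd
        have hvs : v (i + 1) = 1 := ihd (i + 1) (by omega) (by omega)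
        have hge := hnd hi1 hiℓ'
        have hv1' := (Finset.mem_Icc.mp (hv1 i (Finset.mem_Icc.mpr ⟨hi1, by omega⟩))).1
        omega
  intro i hpi hiℓ
  exact key (ℓ - i) i (by omega) hpi

lemma wN_succ_eq_bcoef_erase {I : Finset ℕ} (hI : I.Nonempty) (hIpos : ∀ x ∈ I, 1 ≤ x)
    (hne : (I.erase (I.sup id)).Nonempty) (k : ℕ) :
    wN I (k + 1) = bcoef (I.erase (I.sup id)) k := by
  classical
  set ℓ := I.sup id with hℓ
  set E := I.erase ℓ with hE
  set p := E.sup id with hp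
  have hpE : p ∈ E := sup_mem hne
  have hpI : p ∈ I := Finset.mem_of_mem_erase hpE
  have hpℓ : p < ℓ := by
    have h1 : p ≤ ℓ := Finset.le_sup (f := id) hpI
    have h2 : p ≠ ℓ := Finset.ne_of_mem_erase hpE
    omega
  have hp1 : 1 ≤ p := hIpos p hpI
  have hbound : ∀ x ∈ E, x ≤ p := fun x hx => Finset.le_sup (f := id) hx
  -- note E.erase p facts
  have hEp : ∀ x, x ∈ E.erase p ↔ (x ∈ E ∧ x < p) := by
    intro x
    rw [Finset.mem_erase]
    constructor
    · rintro ⟨h1, h2⟩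
      exact ⟨h2, lt_of_le_of_ne (hbound x h2) h1⟩
    · rintro ⟨h1, h2⟩
      exact ⟨by omega, h1⟩
  set F := fun (v : ℕ → ℕ) (i : ℕ) => if i ≤ p then v i else 0 with hF
  set W : Set (ℕ → ℕ) := {v ∈ Seqs ℓ (k + 1) | Des ℓ v = ↑E ∧
    (∀ l ∈ Finset.Icc 1 (k + 1), ∃ i ∈ Finset.Icc 1 ℓ, v i = l) ∧ v ℓ = 1} with hW
  have htail : ∀ v ∈ W, ∀ i, p < i → i ≤ ℓ → v i = 1 := by
    rintro v ⟨⟨hv1, hv2⟩, hdes, honto, hlast⟩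
    exact tail_ones hv1 hdes hlast hbound
  have hinj : Set.InjOn F W := by
    intro v hvW v' hvW' heq
    obtain ⟨⟨hv1, hv2⟩, hdes, honto, hlast⟩ := hvW
    obtain ⟨⟨hv1', hv2'⟩, hdes', honto', hlast'⟩ := hvW'
    funext i
    by_cases hip : i ≤ p
    · have := congrFun heq i
      simpa [hF, hip] using this
    · by_cases hiℓ : i ≤ ℓ
      · rw [htail v ⟨⟨hv1, hv2⟩, hdes, honto, hlast⟩ i (by omega) hiℓ,
          htail v' ⟨⟨hv1', hv2'⟩, hdes', honto', hlast'⟩ i (by omega) hiℓ]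
      · rw [hv2 i (by rw [Finset.mem_Icc]; omega), hv2' i (by rw [Finset.mem_Icc]; omega)]
  have himg : F '' W = {v ∈ Seqs (E.sup id) (k + 1) | Des (E.sup id) v = ↑(E.erase (E.sup id)) ∧
      (∀ l ∈ Finset.Icc 2 (k + 1), ∃ j ∈ Finset.Icc 1 (E.sup id), v j = l) ∧
      v (E.sup id) ≠ 1} := by
    apply Set.eq_of_subset_of_subset
    · rintro w ⟨v, hvW, rfl⟩
      obtain ⟨⟨hv1, hv2⟩, hdes, honto, hlast⟩ := hvW
      have htl := htail v ⟨⟨hv1, hv2⟩, hdes, honto, hlast⟩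
      refine ⟨⟨?_, ?_⟩, ?_, ?_, ?_⟩
      · intro i hi
        rw [Finset.mem_Icc] at hi
        show (if i ≤ p then v i else 0) ∈ Finset.Icc 1 (k + 1)
        rw [if_pos hi.2]
        exact hv1 i (Finset.mem_Icc.mpr ⟨hi.1, by omega⟩)
      · intro i hi
        rw [Finset.mem_Icc] at hi
        push_neg at hi
        show (if i ≤ p then v i else 0) = 0
        by_cases hip : i ≤ p
        · rw [if_pos hip]
          rcases Nat.eq_zero_or_pos i with rfl | hipos
          · exact hv2 0 (by rw [Finset.mem_Icc]; omega)
          · omega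
        · rw [if_neg hip]
      · ext x
        simp only [Des, Set.mem_setOf_eq, Finset.mem_coe]
        rw [hEp x]
        constructor
        · rintro ⟨h1, h2, h3⟩
          have hxp : x < p := h2
          have h3' : v (x + 1) < v x := by
            have hc : F v (x + 1) = v (x + 1) := if_pos (by omega : x + 1 ≤ p)
            have hc' : F v x = v x := if_pos (by omega : x ≤ p)
            rw [hc, hc'] at h3
            exact h3
          exact ⟨(des_mem_iff hdes x).mpr ⟨h1, by omega, h3'⟩, hxp⟩
        · rintro ⟨h1, h2⟩
          have hd := (des_mem_iff hdes x).mp h1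
          have hxp : x < p := h2
          refine ⟨hd.1, h2, ?_⟩
          have hc : F v (x + 1) = v (x + 1) := if_pos (by omega : x + 1 ≤ p)
          have hc' : F v x = v x := if_pos (by omega : x ≤ p)
          rw [hc, hc']
          exact hd.2.2
      · intro l hl
        rw [Finset.mem_Icc] at hl
        obtain ⟨i, hi, hvi⟩ := honto l (by rw [Finset.mem_Icc] at *; omega)
        rw [Finset.mem_Icc] at hi
        have hip : i ≤ p := by
          by_contra hcon
          push_neg at hcon
          rw [htl i hcon hi.2] at hvi
          omega
        refine ⟨i, Finset.mem_Icc.mpr ⟨hi.1, hip⟩, ?_⟩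
        show (if i ≤ p then v i else 0) = l
        rw [if_pos hip, hvi]
      · have hdp : v (p + 1) < v p := ((des_mem_iff hdes p).mp hpE).2.2
        have hvp1 : v (p + 1) = 1 := htl (p + 1) (by omega) (by omega)
        show (if p ≤ p then v p else 0) ≠ 1
        rw [if_pos (le_refl p)]
        omega
    · rintro w ⟨⟨hw1, hw2⟩, hdes, honto, hlast⟩
      set v := fun i => if i ≤ p then w i else if i ≤ ℓ then 1 else 0 with hv
      have hvle : ∀ i, i ≤ p → v i = w i := by
        intro i hip; simp only [hv, if_pos hip]
      have hvmid : ∀ i, p < i → i ≤ ℓ → v i = 1 := by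
        intro i h1 h2; simp only [hv, if_neg (by omega : ¬ i ≤ p), if_pos h2]
      have hvout : ∀ i, ℓ < i → v i = 0 := by
        intro i h1
        simp only [hv, if_neg (by omega : ¬ i ≤ p), if_neg (by omega : ¬ i ≤ ℓ)]
      have hwp2 : 2 ≤ w p := by
        have h1 := (Finset.mem_Icc.mp (hw1 p (Finset.mem_Icc.mpr ⟨hp1, le_refl p⟩))).1
        have h2 : w p ≠ 1 := hlast
        omega
      refine ⟨v, ⟨⟨?_, ?_⟩, ?_, ?_, ?_⟩, ?_⟩
      · intro i hi
        rw [Finset.mem_Icc] at hi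
        by_cases hip : i ≤ p
        · rw [hvle i hip]
          exact hw1 i (Finset.mem_Icc.mpr ⟨hi.1, hip⟩)
        · rw [hvmid i (by omega) hi.2, Finset.mem_Icc]
          omega
      · intro i hi
        rw [Finset.mem_Icc] at hi
        push_neg at hi
        rcases Nat.eq_zero_or_pos i with rfl | hipos
        · rw [hvle 0 (by omega)]
          exact hw2 0 (by rw [Finset.mem_Icc]; omega)
        · exact hvout i (by omega)
      · ext x
        simp only [Des, Set.mem_setOf_eq, Finset.mem_coe]
        constructor
        · rintro ⟨h1, h2, h3⟩
          rcases Nat.lt_trichotomy x p with hxp | hxp | hxp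
          · rw [hvle x (by omega), hvle (x+1) (by omega)] at h3
            have : x ∈ E.erase p := (des_mem_iff hdes x).mpr ⟨h1, hxp, h3⟩
            exact Finset.mem_of_mem_erase this
          · rw [hxp]; exact hpE
          · rw [hvmid x hxp (by omega)] at h3
            by_cases hx1 : x + 1 ≤ ℓ
            · rw [hvmid (x+1) (by omega) hx1] at h3
              omega
            · rw [hvout (x+1) (by omega)] at h3
              omega
        · intro hxE
          have hx1 : 1 ≤ x := hIpos x (Finset.mem_of_mem_erase hxE)
          have hxp : x ≤ p := hbound x hxE
          have hxℓ : x < ℓ := by omega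
          refine ⟨hx1, hxℓ, ?_⟩
          rcases Nat.lt_or_ge x p with hlt | hge
          · have : x ∈ E.erase p := (hEp x).mpr ⟨hxE, hlt⟩
            have hd := (des_mem_iff hdes x).mp this
            rw [hvle x (by omega), hvle (x+1) (by omega)]
            exact hd.2.2
          · have hxeq : x = p := by omega
            rw [hxeq, hvle p (le_refl p), hvmid (p+1) (by omega) (by omega)]
            omega
      · intro l hl
        rw [Finset.mem_Icc] at hl
        by_cases hl1 : l = 1
        · refine ⟨ℓ, Finset.mem_Icc.mpr ⟨by omega, le_refl ℓ⟩, ?_⟩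
          rw [hvmid ℓ hpℓ (le_refl ℓ), hl1]
        · obtain ⟨i, hi, hwi⟩ := honto l (Finset.mem_Icc.mpr ⟨by omega, hl.2⟩)
          rw [Finset.mem_Icc] at hi
          refine ⟨i, Finset.mem_Icc.mpr ⟨hi.1, by omega⟩, ?_⟩
          rw [hvle i hi.2, hwi]
      · rw [hvmid ℓ hpℓ (le_refl ℓ)]
      · funext i
        by_cases hip : i ≤ p
        · show (if i ≤ p then v i else 0) = w i
          rw [if_pos hip, hvle i hip]
        · show (if i ≤ p then v i else 0) = w i
          rw [if_neg hip, hw2 i (by rw [Finset.mem_Icc]; push_neg; intro h; omega)]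
  have : wN I (k + 1) = (F '' W).ncard := by
    rw [wN, ← hℓ, ← hE, Set.ncard_image_of_injOn hinj]
  rw [this, himg, bcoef]

lemma wN_base {I : Finset ℕ} (hI : I.Nonempty) (hIpos : ∀ x ∈ I, 1 ≤ x)
    (hE : I.erase (I.sup id) = ∅) (k : ℕ) :
    wN I (k + 1) = if k = 0 then 1 else 0 := by
  classical
  have hℓ1 : 1 ≤ I.sup id := by
    obtain ⟨a, ha⟩ := hI
    exact le_trans (hIpos a ha) (Finset.le_sup (f := id) ha)
  set ℓ := I.sup id with hℓ
  have hones : ∀ v, v ∈ {v ∈ Seqs ℓ (k + 1) | Des ℓ v = ↑(I.erase ℓ) ∧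
      (∀ l ∈ Finset.Icc 1 (k + 1), ∃ i ∈ Finset.Icc 1 ℓ, v i = l) ∧ v ℓ = 1} →
      ∀ i, 1 ≤ i → i ≤ ℓ → v i = 1 := by
    rintro v ⟨⟨hv1, hv2⟩, hdes, honto, hlast⟩ i h1 h2
    refine tail_ones hv1 hdes hlast (p := 0) ?_ i (by omega) h2
    intro x hx
    rw [hE] at hx
    exact absurd hx (Finset.notMem_empty x)
  rcases Nat.eq_zero_or_pos k with rfl | hk
  · rw [if_pos rfl, wN, ← hℓ]
    have : {v ∈ Seqs ℓ (0 + 1) | Des ℓ v = ↑(I.erase ℓ) ∧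
        (∀ l ∈ Finset.Icc 1 (0 + 1), ∃ i ∈ Finset.Icc 1 ℓ, v i = l) ∧ v ℓ = 1}
        = {fun i => if 1 ≤ i ∧ i ≤ ℓ then 1 else 0} := by
      apply Set.eq_of_subset_of_subset
      · intro v hv
        obtain ⟨⟨hv1, hv2⟩, hdes, honto, hlast⟩ := hv
        have hv' := hones v ⟨⟨hv1, hv2⟩, hdes, honto, hlast⟩
        rw [Set.mem_singleton_iff]
        funext i
        by_cases hi : 1 ≤ i ∧ i ≤ ℓ
        · rw [if_pos hi, hv' i hi.1 hi.2]
        · rw [if_neg hi, hv2 i (by rw [Finset.mem_Icc]; exact hi)]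
      · intro v hv
        rw [Set.mem_singleton_iff] at hv
        subst hv
        refine ⟨⟨?_, ?_⟩, ?_, ?_, ?_⟩
        · intro i hi
          rw [Finset.mem_Icc] at hi
          show (if 1 ≤ i ∧ i ≤ ℓ then 1 else 0) ∈ Finset.Icc 1 (0 + 1)
          rw [if_pos hi, Finset.mem_Icc]
          omega
        · intro i hi
          rw [Finset.mem_Icc] at hi
          show (if 1 ≤ i ∧ i ≤ ℓ then 1 else 0) = 0
          rw [if_neg hi]
        · rw [hE, Finset.coe_empty]
          apply Set.eq_empty_iff_forall_notMem.mpr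
          rintro x ⟨h1, h2, h3⟩
          have h3' : (if 1 ≤ x + 1 ∧ x + 1 ≤ ℓ then 1 else 0)
              < (if 1 ≤ x ∧ x ≤ ℓ then (1:ℕ) else 0) := h3
          rw [if_pos (by omega : 1 ≤ x + 1 ∧ x + 1 ≤ ℓ),
            if_pos (by omega : 1 ≤ x ∧ x ≤ ℓ)] at h3'
          omega
        · intro l hl
          rw [Finset.mem_Icc] at hl
          refine ⟨1, Finset.mem_Icc.mpr ⟨le_refl 1, hℓ1⟩, ?_⟩
          show (if 1 ≤ 1 ∧ 1 ≤ ℓ then 1 else 0) = l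
          rw [if_pos (by omega : 1 ≤ 1 ∧ 1 ≤ ℓ)]
          omega
        · show (if 1 ≤ ℓ ∧ ℓ ≤ ℓ then 1 else 0) = 1
          rw [if_pos (by omega : 1 ≤ ℓ ∧ ℓ ≤ ℓ)]
    rw [this, Set.ncard_singleton]
  · rw [if_neg (by omega)]
    rw [wN, ← hℓ, Set.ncard_eq_zero (finite_subset_seqs (fun v hv => hv.1)),
      Set.eq_empty_iff_forall_notMem]
    intro v hv
    obtain ⟨⟨hv1, hv2⟩, hdes, honto, hlast⟩ := hv
    obtain ⟨i, hi, hvi⟩ := honto 2 (Finset.mem_Icc.mpr ⟨by omega, by omega⟩)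
    rw [Finset.mem_Icc] at hi
    rw [hones v ⟨⟨hv1, hv2⟩, hdes, honto, hlast⟩ i hi.1 hi.2] at hvi
    omega

lemma alt_sum_bcoef : ∀ (t : ℕ) (I : Finset ℕ), I.card = t → I.Nonempty →
    (∀ x ∈ I, 1 ≤ x) →
    ∑ k ∈ Finset.range (I.sup id + 1), (-1 : ℚ) ^ k * (bcoef I k : ℚ)
      = (-1 : ℚ) ^ I.card := by
  intro t
  induction t with
  | zero =>
    intro I hcard hI _
    rw [Finset.card_eq_zero] at hcard
    subst hcard
    exact absurd hI (by simp)
  | succ t ih =>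
    intro I hcard hI hIpos
    have hℓ1 : 1 ≤ I.sup id := by
      obtain ⟨a, ha⟩ := hI
      exact le_trans (hIpos a ha) (Finset.le_sup (f := id) ha)
    set ℓ := I.sup id with hℓ
    have hsplit : ∀ k, (bcoef I k : ℚ) = (uN I (k+1) : ℚ) + (uN I k : ℚ) - (wN I (k+1) : ℚ) := by
      intro k
      have h := bcoef_split hI hIpos k
      have h2 : ((bcoef I k + wN I (k + 1) : ℕ) : ℚ) = ((uN I (k + 1) + uN I k : ℕ) : ℚ) := by
        rw [h]
      push_cast at h2
      linarith
    have hE0 : ∑ k ∈ Finset.range (ℓ + 1), (-1 : ℚ) ^ k * (bcoef I k : ℚ)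
        = - ∑ k ∈ Finset.range (ℓ + 1), (-1 : ℚ) ^ k * (wN I (k+1) : ℚ) := by
      have hexp : ∑ k ∈ Finset.range (ℓ + 1), (-1 : ℚ) ^ k * (bcoef I k : ℚ)
          = (∑ k ∈ Finset.range (ℓ + 1), (-1 : ℚ) ^ k * (uN I (k+1) : ℚ))
            + (∑ k ∈ Finset.range (ℓ + 1), (-1 : ℚ) ^ k * (uN I k : ℚ))
            - ∑ k ∈ Finset.range (ℓ + 1), (-1 : ℚ) ^ k * (wN I (k+1) : ℚ) := by
        rw [← Finset.sum_add_distrib, ← Finset.sum_sub_distrib]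
        refine Finset.sum_congr rfl (fun k _ => ?_)
        rw [hsplit k]; ring
      have hA := Finset.sum_range_succ' (fun k => (-1 : ℚ) ^ k * (uN I k : ℚ)) (ℓ + 1)
      have hB := Finset.sum_range_succ (fun k => (-1 : ℚ) ^ k * (uN I k : ℚ)) (ℓ + 1)
      have hu0 : (uN I 0 : ℚ) = 0 := by rw [uN_zero hI hIpos]; norm_num
      have huℓ : (uN I (ℓ + 1) : ℚ) = 0 := by rw [uN_eq_zero_of_lt (by omega)]; norm_num
      have hS1 : ∑ k ∈ Finset.range (ℓ + 1), (-1 : ℚ) ^ k * (uN I (k+1) : ℚ)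
          = - ∑ k ∈ Finset.range (ℓ + 2), (-1 : ℚ) ^ k * (uN I k : ℚ) := by
        rw [hA, hu0]
        have hneg : ∑ k ∈ Finset.range (ℓ + 1), (-1 : ℚ) ^ (k + 1) * (uN I (k+1) : ℚ)
            = -∑ k ∈ Finset.range (ℓ + 1), (-1 : ℚ) ^ k * (uN I (k+1) : ℚ) := by
          rw [← Finset.sum_neg_distrib]
          exact Finset.sum_congr rfl (fun k _ => by ring)
        rw [hneg]
        ring
      have hS2 : ∑ k ∈ Finset.range (ℓ + 1), (-1 : ℚ) ^ k * (uN I k : ℚ)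
          = ∑ k ∈ Finset.range (ℓ + 2), (-1 : ℚ) ^ k * (uN I k : ℚ) := by
        rw [hB, huℓ]
        ring
      rw [hexp, hS1, ← hS2]
      ring
    by_cases hE : I.erase ℓ = ∅
    · have hc1 : I.card = 1 := by
        have h1 : (I.erase ℓ).card = I.card - 1 := Finset.card_erase_of_mem (sup_mem hI)
        have h2 : (I.erase ℓ).card = 0 := by rw [hE]; rfl
        have h3 : 1 ≤ I.card := Finset.card_pos.mpr hI
        omega
      have hw : ∀ k ∈ Finset.range (ℓ + 1),
          (-1 : ℚ) ^ k * (wN I (k+1) : ℚ) = if k = 0 then 1 else 0 := by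
        intro k _
        rw [wN_base hI hIpos hE k]
        rcases Nat.eq_zero_or_pos k with rfl | hk
        · simp
        · rw [if_neg (by omega), if_neg (by omega)]
          norm_num
      rw [hE0, Finset.sum_congr rfl hw, Finset.sum_ite_eq' (Finset.range (ℓ+1)) 0 (fun _ => (1:ℚ))]
      rw [if_pos (Finset.mem_range.mpr (by omega)), hc1]
      norm_num
    · have hne' : (I.erase ℓ).Nonempty := Finset.nonempty_iff_ne_empty.mpr hE
      have hcard' : (I.erase ℓ).card = t := by
        have h1 : (I.erase ℓ).card = I.card - 1 := Finset.card_erase_of_mem (sup_mem hI)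
        omega
      have hpos' : ∀ x ∈ I.erase ℓ, 1 ≤ x := fun x hx => hIpos x (Finset.mem_of_mem_erase hx)
      have hp : (I.erase ℓ).sup id ≤ ℓ := by
        have := Finset.le_sup (f := id) (sup_mem hne' |> Finset.mem_of_mem_erase)
        exact this
      have hw : ∀ k ∈ Finset.range (ℓ + 1),
          (-1 : ℚ) ^ k * (wN I (k+1) : ℚ) = (-1 : ℚ) ^ k * (bcoef (I.erase ℓ) k : ℚ) := by
        intro k _
        rw [wN_succ_eq_bcoef_erase hI hIpos hne' k]
      have hshrink : ∑ k ∈ Finset.range (ℓ + 1), (-1 : ℚ) ^ k * (bcoef (I.erase ℓ) k : ℚ)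
          = ∑ k ∈ Finset.range ((I.erase ℓ).sup id + 1),
              (-1 : ℚ) ^ k * (bcoef (I.erase ℓ) k : ℚ) := by
        symm
        apply Finset.sum_subset
        · intro x hx
          rw [Finset.mem_range] at *
          omega
        · intro x _ hx
          rw [Finset.mem_range] at hx
          rw [bcoef_eq_zero_of_lt (by omega)]
          norm_num
      rw [hE0, Finset.sum_congr rfl hw, hshrink, ih (I.erase ℓ) hcard' hne' hpos', hcard', hcard]
      ring

/-- if `c_0,…,c_{α_t}` are the coefficients of `N(I,n)` in the basis
`(C(n,i))_i`, then `c_i = (-1)^{i+t}` for every `0 ≤ i ≤ L`. -/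
theorem stmt_15 (I : Finset ℕ) (hI : I.Nonempty) (hIpos : ∀ x ∈ I, 1 ≤ x)
    (c : ℕ → ℚ)
    (hc : ∀ n : ℕ, 1 ≤ n →
      (Ncount I n : ℚ) = ∑ i ∈ Finset.range (I.sup id + 1), c i * (n.choose i : ℚ)) :
    ∀ i ≤ longestRun I, c i = (-1 : ℚ) ^ (i + I.card) := by
  classical
  have hℓ1 : 1 ≤ I.sup id := by
    obtain ⟨a, ha⟩ := hI
    exact le_trans (hIpos a ha) (Finset.le_sup (f := id) ha)
  set ℓ := I.sup id with hℓ
  set c' : ℕ → ℚ := fun i => ∑ k ∈ Finset.Icc i ℓ, (-1 : ℚ) ^ (k - i) * (bcoef I k : ℚ)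
    with hc'def
  have hIcc_filter : ∀ i : ℕ, Finset.Icc i ℓ = (Finset.range (ℓ+1)).filter (fun k => i ≤ k) := by
    intro i
    ext k
    rw [Finset.mem_Icc, Finset.mem_filter, Finset.mem_range]
    omega
  have key : ∀ n : ℕ, 1 ≤ n →
      ∑ i ∈ Finset.range (ℓ + 1), c' i * (n.choose i : ℚ) = (Ncount I n : ℚ) := by
    intro n hn
    have step1 : ∑ i ∈ Finset.range (ℓ + 1), c' i * (n.choose i : ℚ)
        = ∑ i ∈ Finset.range (ℓ + 1), ∑ k ∈ Finset.range (ℓ + 1),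
            (if i ≤ k then (-1 : ℚ) ^ (k - i) * (bcoef I k : ℚ) * (n.choose i : ℚ) else 0) := by
      refine Finset.sum_congr rfl (fun i _ => ?_)
      rw [hc'def]
      simp only
      rw [Finset.sum_mul, hIcc_filter i, Finset.sum_filter]
    rw [step1, Finset.sum_comm]
    have step2 : ∀ k ∈ Finset.range (ℓ + 1),
        ∑ i ∈ Finset.range (ℓ + 1),
          (if i ≤ k then (-1 : ℚ) ^ (k - i) * (bcoef I k : ℚ) * (n.choose i : ℚ) else 0)
        = (bcoef I k : ℚ) * ((n - 1).choose k : ℚ) := by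
      intro k hk
      rw [Finset.mem_range] at hk
      have hflt : (Finset.range (ℓ+1)).filter (fun i => i ≤ k) = Finset.range (k+1) := by
        ext x
        rw [Finset.mem_filter, Finset.mem_range, Finset.mem_range]
        omega
      rw [← Finset.sum_filter, hflt]
      have : ∑ i ∈ Finset.range (k+1), (-1 : ℚ) ^ (k - i) * (bcoef I k : ℚ) * (n.choose i : ℚ)
          = (bcoef I k : ℚ) * ∑ i ∈ Finset.range (k+1), (-1 : ℚ) ^ (k - i) * (n.choose i : ℚ) := by
        rw [Finset.mul_sum]
        exact Finset.sum_congr rfl (fun i _ => by ring)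
      rw [this, sum_alt_choose n k hn]
    rw [Finset.sum_congr rfl step2]
    have := Ncount_expand hI hIpos hn
    rw [this]
    push_cast
    exact Finset.sum_congr rfl (fun k _ => by ring)
  -- uniqueness of coefficients
  have hdiff : ∀ n : ℕ, 1 ≤ n →
      ∑ i ∈ Finset.range (ℓ + 1), (c i - c' i) * (n.choose i : ℚ) = 0 := by
    intro n hn
    have h1 := hc n hn
    have h2 := key n hn
    have : ∑ i ∈ Finset.range (ℓ + 1), (c i - c' i) * (n.choose i : ℚ)
        = ∑ i ∈ Finset.range (ℓ + 1), c i * (n.choose i : ℚ)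
          - ∑ i ∈ Finset.range (ℓ + 1), c' i * (n.choose i : ℚ) := by
      rw [← Finset.sum_sub_distrib]
      exact Finset.sum_congr rfl (fun i _ => by ring)
    rw [this, ← h1, h2]
    ring
  have hcc' := binom_unique (ℓ + 1) (fun i => c i - c' i) hdiff
  have hLle : longestRun I ≤ ℓ := by
    apply Finset.sup_le
    intro a ha
    have h1 : ((Finset.Icc a (I.sup id)).filter fun b => Finset.Icc a b ⊆ I).card
        ≤ (Finset.Icc a (I.sup id)).card := Finset.card_filter_le _ _
    rw [Nat.card_Icc] at h1
    have h2 := hIpos a ha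
    show ((Finset.Icc a (I.sup id)).filter fun b => Finset.Icc a b ⊆ I).card ≤ I.sup id
    omega
  intro i hiL
  have hiℓ : i ≤ ℓ := le_trans hiL hLle
  have hci : c i = c' i := by
    have := hcc' i (by omega)
    linarith
  -- compute c' i
  have hsq : ((-1 : ℚ)) ^ i * ((-1 : ℚ)) ^ i = 1 := by
    rw [← pow_add, show i + i = 2 * i by omega, pow_mul]
    norm_num
  have hterm : ∀ k ∈ Finset.Icc i ℓ,
      (-1 : ℚ) ^ (k - i) * (bcoef I k : ℚ)
        = (-1 : ℚ) ^ i * ((-1 : ℚ) ^ k * (bcoef I k : ℚ)) := by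
    intro k hk
    rw [Finset.mem_Icc] at hk
    have hk' : k = k - i + i := by omega
    calc (-1 : ℚ) ^ (k - i) * (bcoef I k : ℚ)
        = ((-1 : ℚ) ^ i * (-1 : ℚ) ^ i) * ((-1 : ℚ) ^ (k - i) * (bcoef I k : ℚ)) := by
          rw [hsq]; ring
      _ = (-1 : ℚ) ^ i * ((-1 : ℚ) ^ ((k - i) + i) * (bcoef I k : ℚ)) := by
          rw [pow_add]; ring
      _ = (-1 : ℚ) ^ i * ((-1 : ℚ) ^ k * (bcoef I k : ℚ)) := by
          rw [← hk']
  have hzero : ∑ k ∈ Finset.range i, (-1 : ℚ) ^ k * (bcoef I k : ℚ) = 0 := by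
    refine Finset.sum_eq_zero (fun k hk => ?_)
    rw [Finset.mem_range] at hk
    rw [bcoef_eq_zero hI hIpos (by omega : k < longestRun I)]
    norm_num
  have hconsec : ∑ k ∈ Finset.range i, (-1 : ℚ) ^ k * (bcoef I k : ℚ)
      + ∑ k ∈ Finset.Icc i ℓ, (-1 : ℚ) ^ k * (bcoef I k : ℚ)
      = ∑ k ∈ Finset.range (ℓ + 1), (-1 : ℚ) ^ k * (bcoef I k : ℚ) := by
    rw [Finset.range_eq_Ico, Finset.range_eq_Ico, ← Finset.Ico_add_one_right_eq_Icc]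
    exact Finset.sum_Ico_consecutive (fun k => (-1 : ℚ) ^ k * (bcoef I k : ℚ)) (Nat.zero_le i) (by omega : i ≤ ℓ + 1)
  have halt := alt_sum_bcoef I.card I rfl hI hIpos
  rw [← hℓ] at halt
  have hIccsum : ∑ k ∈ Finset.Icc i ℓ, (-1 : ℚ) ^ k * (bcoef I k : ℚ)
      = (-1 : ℚ) ^ I.card := by
    rw [← halt, ← hconsec, hzero]
    ring
  rw [hci, hc'def]
  simp only
  rw [Finset.sum_congr rfl hterm, ← Finset.mul_sum, hIccsum, pow_add]
end

section
/- Let k be an integer with k ≤ −1, and let a_0, a_1, …, a_{α_t} be the unique rational numbers such that N(I,n) = Σ_{i=0}^{α_t} a_i · C(n+k, i) for every positive integer n, where for an integer a and nonnegative integer i, C(a,i) = a(a−1)⋯(a−i+1)/i! denotes the generalized binomial coefficient. Then a_i ≥ 0 for every i with 0 ≤ i ≤ α_t. -/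
open Finset

/-- auxiliary: relabelling map. -/
def relmap (ℓ : ℕ) (e : ℕ → ℕ) (v : ℕ → ℕ) : ℕ → ℕ :=
  fun i => if i ∈ Finset.Icc 1 ℓ then e (v i) else 0
/-- auxiliary: sequences with values in `V`, descents `D`, using all values of `u`, last ≠ 1. -/
def GoodSet (ℓ : ℕ) (D : Finset ℕ) (V : Finset ℕ) (u : Finset ℕ) : Set (ℕ → ℕ) :=
  {v | (∀ i ∈ Finset.Icc 1 ℓ, v i ∈ V) ∧ (∀ i, i ∉ Finset.Icc 1 ℓ → v i = 0) ∧
       Des ℓ v = ↑D ∧ (∀ l ∈ u, ∃ j ∈ Finset.Icc 1 ℓ, v j = l) ∧ v ℓ ≠ 1}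
lemma goodSet_finite (ℓ : ℕ) (D V u : Finset ℕ) : (GoodSet ℓ D V u).Finite := by
  classical
  have hsub : (fun v : ℕ → ℕ => (fun i : Fin (ℓ+1) => v i)) '' GoodSet ℓ D V u ⊆
      Set.pi Set.univ (fun _ : Fin (ℓ+1) => (↑(insert 0 V) : Set ℕ)) := by
    rintro g ⟨v, hv, rfl⟩ i _
    by_cases h : (i : ℕ) ∈ Finset.Icc 1 ℓ
    · exact Finset.mem_coe.mpr (Finset.mem_insert_of_mem (hv.1 _ h))
    · simp [hv.2.1 _ h]
  have hfin : ((fun v : ℕ → ℕ => (fun i : Fin (ℓ+1) => v i)) '' GoodSet ℓ D V u).Finite :=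
    (Set.Finite.pi (fun _ => (insert 0 V).finite_toSet)).subset hsub
  refine Set.Finite.of_finite_image hfin ?_
  intro v hv w hw h
  funext i
  by_cases hi : i ∈ Finset.Icc 1 ℓ
  · have hi' : i < ℓ + 1 := by
      rw [Finset.mem_Icc] at hi; omega
    have := congrFun h ⟨i, hi'⟩
    simpa using this
  · rw [hv.2.1 _ hi, hw.2.1 _ hi]
lemma relmap_mem {ℓ : ℕ} (hl : 1 ≤ ℓ) {D V W uV uW : Finset ℕ} {e : ℕ → ℕ}
    (h1V : (1:ℕ) ∈ V) (he1 : e 1 = 1)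
    (hmono : ∀ x ∈ V, ∀ y ∈ V, x < y → e x < e y)
    (hmaps : ∀ x ∈ V, e x ∈ W)
    (hu : ∀ l ∈ uW, ∃ x ∈ uV, e x = l)
    {v : ℕ → ℕ} (hv : v ∈ GoodSet ℓ D V uV) : relmap ℓ e v ∈ GoodSet ℓ D W uW := by
  obtain ⟨hval, hzero, hdes, huse, hne⟩ := hv
  have hlm : ℓ ∈ Finset.Icc 1 ℓ := Finset.mem_Icc.mpr ⟨hl, le_refl ℓ⟩
  have hinj : ∀ x ∈ V, ∀ y ∈ V, e x = e y → x = y := by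
    intro x hx y hy hxy
    rcases lt_trichotomy x y with h | h | h
    · exact absurd hxy (ne_of_lt (hmono x hx y hy h))
    · exact h
    · exact absurd hxy.symm (ne_of_lt (hmono y hy x hx h))
  refine ⟨?_, ?_, ?_, ?_, ?_⟩
  · intro i hi
    simp only [relmap, if_pos hi]
    exact hmaps _ (hval i hi)
  · intro i hi
    simp only [relmap, if_neg hi]
  · rw [← hdes]
    ext i
    simp only [Des, Set.mem_setOf_eq]
    constructor
    · rintro ⟨h1, h2, h3⟩
      refine ⟨h1, h2, ?_⟩
      have hi : i ∈ Finset.Icc 1 ℓ := Finset.mem_Icc.mpr ⟨h1, le_of_lt h2⟩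
      have hi1 : i + 1 ∈ Finset.Icc 1 ℓ := Finset.mem_Icc.mpr ⟨by omega, h2⟩
      simp only [relmap, if_pos hi1, if_pos hi] at h3
      by_contra hcon
      push_neg at hcon
      rcases eq_or_lt_of_le hcon with h | h
      · rw [h] at h3; exact lt_irrefl _ h3
      · exact absurd h3 (not_lt.mpr (le_of_lt (hmono _ (hval _ hi) _ (hval _ hi1) h)))
    · rintro ⟨h1, h2, h3⟩
      have hi : i ∈ Finset.Icc 1 ℓ := Finset.mem_Icc.mpr ⟨h1, le_of_lt h2⟩
      have hi1 : i + 1 ∈ Finset.Icc 1 ℓ := Finset.mem_Icc.mpr ⟨by omega, h2⟩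
      refine ⟨h1, h2, ?_⟩
      simp only [relmap, if_pos hi1, if_pos hi]
      exact hmono _ (hval _ hi1) _ (hval _ hi) h3
  · intro l hl'
    obtain ⟨x, hx, hex⟩ := hu l hl'
    obtain ⟨j, hj, hvj⟩ := huse x hx
    refine ⟨j, hj, ?_⟩
    simp only [relmap, if_pos hj]
    rw [hvj, hex]
  · simp only [relmap, if_pos hlm]
    intro hcon
    exact hne (hinj _ (hval _ hlm) _ h1V (by rw [hcon, he1]))
lemma relmap_injOn {ℓ : ℕ} {D V uV : Finset ℕ} {e : ℕ → ℕ}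
    (hinj : ∀ x ∈ V, ∀ y ∈ V, e x = e y → x = y) :
    Set.InjOn (relmap ℓ e) (GoodSet ℓ D V uV) := by
  intro v hv w hw h
  funext i
  by_cases hi : i ∈ Finset.Icc 1 ℓ
  · have h2 := congrFun h i
    simp only [relmap, if_pos hi] at h2
    exact hinj _ (hv.1 _ hi) _ (hw.1 _ hi) h2
  · rw [hv.2.1 _ hi, hw.2.1 _ hi]
lemma goodSet_ncard_le {ℓ : ℕ} (hl : 1 ≤ ℓ) {D V W uV uW : Finset ℕ} {e : ℕ → ℕ}
    (h1V : (1:ℕ) ∈ V) (he1 : e 1 = 1)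
    (hmono : ∀ x ∈ V, ∀ y ∈ V, x < y → e x < e y)
    (hmaps : ∀ x ∈ V, e x ∈ W)
    (hu : ∀ l ∈ uW, ∃ x ∈ uV, e x = l) :
    (GoodSet ℓ D V uV).ncard ≤ (GoodSet ℓ D W uW).ncard := by
  have hinj : ∀ x ∈ V, ∀ y ∈ V, e x = e y → x = y := by
    intro x hx y hy hxy
    rcases lt_trichotomy x y with h | h | h
    · exact absurd hxy (ne_of_lt (hmono x hx y hy h))
    · exact h
    · exact absurd hxy.symm (ne_of_lt (hmono y hy x hx h))
  rw [← Set.ncard_image_of_injOn (relmap_injOn (uV := uV) (D := D) (ℓ := ℓ) hinj)]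
  apply Set.ncard_le_ncard _ (goodSet_finite _ _ _ _)
  rintro _ ⟨v, hv, rfl⟩
  exact relmap_mem hl h1V he1 hmono hmaps hu hv
lemma goodSet_pack {ℓ : ℕ} (hl : 1 ≤ ℓ) (D : Finset ℕ) (S : Finset ℕ) (hS : ∀ x ∈ S, 2 ≤ x) :
    (GoodSet ℓ D (insert 1 S) S).ncard
      = (GoodSet ℓ D (Finset.Icc 1 (S.card + 1)) (Finset.Icc 2 (S.card + 1))).ncard := by
  classical
  set V : Finset ℕ := insert 1 S with hV
  have h1S : (1:ℕ) ∉ S := fun h => by have := hS 1 h; omega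
  have hcV : V.card = S.card + 1 := Finset.card_insert_of_notMem h1S
  have h1V : (1:ℕ) ∈ V := Finset.mem_insert_self 1 S
  have hVge : ∀ x ∈ V, 1 ≤ x := by
    intro x hx
    rcases Finset.mem_insert.mp hx with h | h
    · omega
    · have := hS x h; omega
  set e : ℕ → ℕ := fun x => (V.filter (· ≤ x)).card with he
  have he1 : e 1 = 1 := by
    have h2 : V.filter (· ≤ 1) = {1} := by
      ext x
      simp only [Finset.mem_filter, Finset.mem_singleton]
      constructor
      · rintro ⟨hx, hx1⟩
        have := hVge x hx; omega
      · rintro rfl; exact ⟨h1V, le_refl 1⟩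
    simp only [he, h2, Finset.card_singleton]
  have hmono : ∀ x ∈ V, ∀ y ∈ V, x < y → e x < e y := by
    intro x hx y hy hxy
    apply Finset.card_lt_card
    rw [Finset.ssubset_def]
    constructor
    · intro z hz
      rw [Finset.mem_filter] at hz ⊢
      exact ⟨hz.1, by omega⟩
    · intro hcon
      have h3 := hcon (Finset.mem_filter.mpr ⟨hy, le_refl y⟩)
      have h4 := (Finset.mem_filter.mp h3).2
      omega
  have hmaps : ∀ x ∈ V, e x ∈ Finset.Icc 1 (S.card + 1) := by
    intro x hx
    rw [Finset.mem_Icc]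
    constructor
    · exact Finset.card_pos.mpr ⟨x, Finset.mem_filter.mpr ⟨hx, le_refl x⟩⟩
    · calc (V.filter (· ≤ x)).card ≤ V.card := Finset.card_filter_le _ _
        _ = S.card + 1 := hcV
  have hinj : ∀ x ∈ V, ∀ y ∈ V, e x = e y → x = y := by
    intro x hx y hy hxy
    rcases lt_trichotomy x y with h | h | h
    · exact absurd hxy (ne_of_lt (hmono x hx y hy h))
    · exact h
    · exact absurd hxy.symm (ne_of_lt (hmono y hy x hx h))
  have hsurj : ∀ l ∈ Finset.Icc 1 (S.card+1), ∃ x ∈ V, e x = l := by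
    have h5 := Finset.surj_on_of_inj_on_of_card_le (s := V) (t := Finset.Icc 1 (S.card+1))
      (fun x _ => e x) (fun x hx => hmaps x hx)
      (fun x y hx hy hxy => hinj x hx y hy hxy)
      (by rw [Nat.card_Icc, hcV]; omega)
    intro l hlm
    obtain ⟨x, hx, hex⟩ := h5 l hlm
    exact ⟨x, hx, hex.symm⟩
  have hu : ∀ l ∈ Finset.Icc 2 (S.card+1), ∃ x ∈ S, e x = l := by
    intro l hlm
    rw [Finset.mem_Icc] at hlm
    obtain ⟨x, hx, hex⟩ := hsurj l (Finset.mem_Icc.mpr ⟨by omega, hlm.2⟩)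
    have hx1 : x ≠ 1 := by
      rintro rfl
      rw [he1] at hex
      omega
    exact ⟨x, (Finset.mem_insert.mp hx).resolve_left hx1, hex⟩
  have hVne : V.Nonempty := ⟨1, h1V⟩
  set e' : ℕ → ℕ := fun r => if h : r - 1 < V.card then (V.orderIsoOfFin rfl ⟨r-1, h⟩ : ℕ) else 0 with he'
  have hmin : V.min' hVne = 1 :=
    le_antisymm (Finset.min'_le _ _ h1V) (Finset.le_min' _ _ _ hVge)
  have he'1 : e' 1 = 1 := by
    have h0 : (1:ℕ) - 1 < V.card := by omega
    simp only [he', dif_pos h0]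
    rw [Finset.coe_orderIsoOfFin_apply]
    have := Finset.orderEmbOfFin_zero (s := V) (rfl : V.card = V.card) (by omega)
    rw [show (⟨1-1, h0⟩ : Fin V.card) = ⟨0, by omega⟩ from rfl, this, hmin]
  have he'maps : ∀ x ∈ Finset.Icc 1 (S.card+1), e' x ∈ V := by
    intro x hx
    rw [Finset.mem_Icc] at hx
    have hx' : x - 1 < V.card := by omega
    simp only [he', dif_pos hx']
    rw [Finset.coe_orderIsoOfFin_apply]
    exact Finset.orderEmbOfFin_mem _ _ _
  have he'mono : ∀ x ∈ Finset.Icc 1 (S.card+1), ∀ y ∈ Finset.Icc 1 (S.card+1),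
      x < y → e' x < e' y := by
    intro x hx y hy hxy
    rw [Finset.mem_Icc] at hx hy
    have hx' : x - 1 < V.card := by omega
    have hy' : y - 1 < V.card := by omega
    simp only [he', dif_pos hx', dif_pos hy']
    have h6 : (⟨x-1, hx'⟩ : Fin V.card) < ⟨y-1, hy'⟩ := by
      rw [Fin.lt_def]; simp; omega
    exact (V.orderIsoOfFin rfl).strictMono h6
  have he'inj : ∀ x ∈ Finset.Icc 1 (S.card+1), ∀ y ∈ Finset.Icc 1 (S.card+1),
      e' x = e' y → x = y := by
    intro x hx y hy hxy
    rcases lt_trichotomy x y with h | h | h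
    · exact absurd hxy (ne_of_lt (he'mono x hx y hy h))
    · exact h
    · exact absurd hxy.symm (ne_of_lt (he'mono y hy x hx h))
  have he'surj : ∀ x ∈ V, ∃ r ∈ Finset.Icc 1 (S.card+1), e' r = x := by
    have h5 := Finset.surj_on_of_inj_on_of_card_le (s := Finset.Icc 1 (S.card+1)) (t := V)
      (fun r _ => e' r) (fun r hr => he'maps r hr)
      (fun x y hx hy hxy => he'inj x hx y hy hxy)
      (by rw [Nat.card_Icc, hcV]; omega)
    intro x hx
    obtain ⟨r, hr, her⟩ := h5 x hx
    exact ⟨r, hr, her.symm⟩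
  have he'u : ∀ x ∈ S, ∃ r ∈ Finset.Icc 2 (S.card+1), e' r = x := by
    intro x hx
    obtain ⟨r, hr, her⟩ := he'surj x (Finset.mem_insert_of_mem hx)
    rw [Finset.mem_Icc] at hr
    have hr1 : r ≠ 1 := by
      rintro rfl
      rw [he'1] at her
      have := hS x hx; omega
    exact ⟨r, Finset.mem_Icc.mpr ⟨by omega, hr.2⟩, her⟩
  have h1W : (1:ℕ) ∈ Finset.Icc 1 (S.card+1) := Finset.mem_Icc.mpr ⟨le_refl 1, by omega⟩
  exact le_antisymm
    (goodSet_ncard_le hl h1V he1 hmono hmaps hu)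
    (goodSet_ncard_le hl h1W he'1 he'mono he'maps he'u)
lemma goodSet_zero {ℓ : ℕ} (hl : 1 ≤ ℓ) (D : Finset ℕ) {j : ℕ} (hj : ℓ < j) :
    (GoodSet ℓ D (Finset.Icc 1 (j+1)) (Finset.Icc 2 (j+1))).ncard = 0 := by
  classical
  convert Set.ncard_empty (ℕ → ℕ)
  rw [Set.eq_empty_iff_forall_notMem]
  rintro v ⟨hval, hzero, hdes, huse, hne⟩
  have hcard : (Finset.Icc 1 ℓ).card < (Finset.Icc 2 (j+1)).card := by
    rw [Nat.card_Icc, Nat.card_Icc]; omega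
  set f : ℕ → ℕ := fun l => if h : ∃ p, p ∈ Finset.Icc 1 ℓ ∧ v p = l then h.choose else 1 with hf
  have hwit : ∀ l ∈ Finset.Icc 2 (j+1), f l ∈ Finset.Icc 1 ℓ ∧ v (f l) = l := by
    intro l hlm
    obtain ⟨p, hp, hvp⟩ := huse l hlm
    have hex : ∃ p, p ∈ Finset.Icc 1 ℓ ∧ v p = l := ⟨p, hp, hvp⟩
    simp only [hf, dif_pos hex]
    exact hex.choose_spec
  obtain ⟨l, hl1, l', hl2, hne', hfe⟩ :=
    Finset.exists_ne_map_eq_of_card_lt_of_maps_to hcard (fun l hlm => (hwit l hlm).1)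
  have h1 := (hwit l hl1).2
  have h2 := (hwit l' hl2).2
  rw [hfe] at h1
  exact hne' (h1.symm.trans h2)
lemma count_main {ℓ : ℕ} (hl : 1 ≤ ℓ) (D : Finset ℕ) (n : ℕ) (hn : 1 ≤ n) :
    (GoodSet ℓ D (Finset.Icc 1 n) ∅).ncard
      = ∑ m ∈ Finset.range n,
          (n-1).choose m * (GoodSet ℓ D (Finset.Icc 1 (m+1)) (Finset.Icc 2 (m+1))).ncard := by
  classical
  have hA : (GoodSet ℓ D (Finset.Icc 1 n) ∅).Finite := goodSet_finite _ _ _ _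
  set F := hA.toFinset with hF
  set c : (ℕ → ℕ) → Finset ℕ := fun v => ((Finset.Icc 1 ℓ).image v).erase 1 with hc
  have hmapsc : ∀ v ∈ F, c v ∈ (Finset.Icc 2 n).powerset := by
    intro v hv
    rw [hF, Set.Finite.mem_toFinset] at hv
    rw [Finset.mem_powerset]
    intro x hx
    obtain ⟨hx1, hxim⟩ := Finset.mem_erase.mp hx
    obtain ⟨i, hi, rfl⟩ := Finset.mem_image.mp hxim
    have h7 := hv.1 i hi
    rw [Finset.mem_Icc] at h7 ⊢
    omega
  have hcard := Finset.card_eq_sum_card_fiberwise hmapsc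
  have hfib : ∀ S ∈ (Finset.Icc 2 n).powerset,
      (F.filter (fun v => c v = S)).card = (GoodSet ℓ D (insert 1 S) S).ncard := by
    intro S hSp
    rw [Finset.mem_powerset] at hSp
    have hS2 : ∀ x ∈ S, 2 ≤ x := fun x hx => (Finset.mem_Icc.mp (hSp hx)).1
    rw [← Set.ncard_coe_finset]
    congr 1
    ext v
    simp only [Finset.coe_filter, Set.mem_setOf_eq, hF, Set.Finite.mem_toFinset]
    constructor
    · rintro ⟨hvA, hcv⟩
      obtain ⟨hval, hzero, hdes, -, hne⟩ := hvA
      refine ⟨?_, hzero, hdes, ?_, hne⟩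
      · intro i hi
        by_cases h1 : v i = 1
        · rw [h1]; exact Finset.mem_insert_self _ _
        · apply Finset.mem_insert_of_mem
          rw [← hcv]
          exact Finset.mem_erase.mpr ⟨h1, Finset.mem_image_of_mem v hi⟩
      · intro l hlS
        have h8 : l ∈ c v := hcv ▸ hlS
        obtain ⟨hl1, hlim⟩ := Finset.mem_erase.mp h8
        obtain ⟨i, hi, hvi⟩ := Finset.mem_image.mp hlim
        exact ⟨i, hi, hvi⟩
    · rintro ⟨hval, hzero, hdes, huse, hne⟩
      constructor
      · refine ⟨?_, hzero, hdes, by simp, hne⟩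
        intro i hi
        rcases Finset.mem_insert.mp (hval i hi) with h | h
        · rw [h]; exact Finset.mem_Icc.mpr ⟨le_refl 1, hn⟩
        · have h9 := Finset.mem_Icc.mp (hSp h)
          exact Finset.mem_Icc.mpr ⟨by omega, h9.2⟩
      · ext l
        constructor
        · intro hlc
          obtain ⟨hl1, hlim⟩ := Finset.mem_erase.mp hlc
          obtain ⟨i, hi, hvi⟩ := Finset.mem_image.mp hlim
          rcases Finset.mem_insert.mp (hval i hi) with h | h
          · exact absurd (hvi ▸ h) hl1
          · exact hvi ▸ h
        · intro hlS
          refine Finset.mem_erase.mpr ⟨?_, ?_⟩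
          · rintro rfl
            have := hS2 1 hlS; omega
          · obtain ⟨i, hi, hvi⟩ := huse l hlS
            exact hvi ▸ Finset.mem_image_of_mem v hi
  have hstep : (GoodSet ℓ D (Finset.Icc 1 n) ∅).ncard
      = ∑ S ∈ (Finset.Icc 2 n).powerset,
          (GoodSet ℓ D (Finset.Icc 1 (S.card+1)) (Finset.Icc 2 (S.card+1))).ncard := by
    rw [Set.ncard_eq_toFinset_card _ hA, ← hF, hcard]
    exact Finset.sum_congr rfl (fun S hS => by rw [hfib S hS, goodSet_pack hl D S
      (fun x hx => (Finset.mem_Icc.mp ((Finset.mem_powerset.mp hS) hx)).1)])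
  rw [hstep]
  have := Finset.sum_powerset_apply_card
    (fun m => (GoodSet ℓ D (Finset.Icc 1 (m+1)) (Finset.Icc 2 (m+1))).ncard)
    (x := Finset.Icc 2 n)
  rw [this]
  have hc2 : (Finset.Icc 2 n).card = n - 1 := by rw [Nat.card_Icc]; omega
  rw [hc2, show n - 1 + 1 = n by omega]
  exact Finset.sum_congr rfl (fun m _ => by rw [smul_eq_mul])
lemma ncount_eq_good (I : Finset ℕ) (n : ℕ) :
    Ncount I n = (GoodSet (I.sup id) (I.erase (I.sup id)) (Finset.Icc 1 n) ∅).ncard := by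
  unfold Ncount GoodSet
  congr 1
  ext v
  simp only [Set.mem_setOf_eq, Seqs, Set.mem_sep_iff, Finset.notMem_empty]
  tauto
lemma bcoef_eq_good (I : Finset ℕ) (m : ℕ) :
    bcoef I m = (GoodSet (I.sup id) (I.erase (I.sup id))
      (Finset.Icc 1 (m+1)) (Finset.Icc 2 (m+1))).ncard := by
  unfold bcoef GoodSet
  congr 1
  ext v
  simp only [Set.mem_setOf_eq, Seqs, Set.mem_sep_iff]
  tauto
lemma ncount_formula (I : Finset ℕ) (hI : I.Nonempty) (hIpos : ∀ x ∈ I, 1 ≤ x)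
    (n : ℕ) (hn : 1 ≤ n) :
    (Ncount I n : ℚ) = ∑ m ∈ Finset.range (I.sup id + 1),
      (bcoef I m : ℚ) * (((n-1).choose m : ℕ) : ℚ) := by
  classical
  obtain ⟨x, hx⟩ := hI
  have hl : 1 ≤ I.sup id := le_trans (hIpos x hx) (Finset.le_sup (f := id) hx)
  set ℓ := I.sup id with hℓ
  set D := I.erase ℓ with hD
  have h1 := count_main hl D n hn
  rw [ncount_eq_good, h1]
  have hL : ∑ m ∈ Finset.range n,
        (((n-1).choose m : ℕ) : ℚ) * ((GoodSet ℓ D (Finset.Icc 1 (m+1)) (Finset.Icc 2 (m+1))).ncard : ℚ)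
      = ∑ m ∈ Finset.range (n + ℓ + 1),
        (((n-1).choose m : ℕ) : ℚ) * ((GoodSet ℓ D (Finset.Icc 1 (m+1)) (Finset.Icc 2 (m+1))).ncard : ℚ) := by
    apply Finset.sum_subset (Finset.range_subset_range.mpr (by omega))
    intro m _ hm
    rw [Finset.mem_range, not_lt] at hm
    rw [Nat.choose_eq_zero_of_lt (by omega)]
    norm_num
  have hR : ∑ m ∈ Finset.range (ℓ + 1),
        (bcoef I m : ℚ) * (((n-1).choose m : ℕ) : ℚ)
      = ∑ m ∈ Finset.range (n + ℓ + 1),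
        (bcoef I m : ℚ) * (((n-1).choose m : ℕ) : ℚ) := by
    apply Finset.sum_subset (Finset.range_subset_range.mpr (by omega))
    intro m _ hm
    rw [Finset.mem_range, not_lt] at hm
    rw [bcoef_eq_good, ← hℓ, ← hD, goodSet_zero hl D (by omega)]
    norm_num
  push_cast
  rw [hL, hR]
  exact Finset.sum_congr rfl (fun m _ => by rw [bcoef_eq_good, ← hℓ, ← hD]; ring)
lemma genChoose_natCast (s i : ℕ) : genChoose (s : ℤ) i = (s.choose i : ℚ) := by
  rcases le_or_gt i s with h | h
  · have hp : ∀ i' ≤ s, (∏ j ∈ Finset.range i', (((s:ℤ) : ℚ) - (j : ℚ))) = (s.descFactorial i' : ℚ) := by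
      intro i' hi'
      induction i' with
      | zero => simp
      | succ i' ih =>
        rw [Finset.prod_range_succ, ih (Nat.le_of_succ_le hi'), Nat.descFactorial_succ]
        push_cast [Nat.cast_sub (Nat.le_of_succ_le hi')]
        ring
    rw [genChoose, hp i h, Nat.descFactorial_eq_factorial_mul_choose]
    push_cast
    rw [mul_comm, mul_div_assoc, div_self (by exact_mod_cast Nat.factorial_ne_zero i), mul_one]
  · rw [genChoose, Finset.prod_eq_zero (Finset.mem_range.mpr h) (by push_cast; ring),
      Nat.choose_eq_zero_of_lt h]
    simp
lemma keyK : ∀ (i m j : ℕ),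
    ∑ s ∈ Finset.range (i+1), (-1:ℚ)^s * (i.choose s) * ((m+s).choose j)
      = (-1:ℚ)^i * (if i ≤ j then ((m.choose (j - i) : ℕ) : ℚ) else 0) := by
  intro i
  induction i with
  | zero => intro m j; simp
  | succ i ih =>
    intro m j
    have hT : ∑ s ∈ Finset.range (i+1), (-1:ℚ)^s * (i.choose (s+1)) * ((m+(s+1)).choose j)
        = ((m.choose j : ℕ):ℚ) - ∑ s ∈ Finset.range (i+1), (-1:ℚ)^s * (i.choose s) * ((m+s).choose j) := by
      rw [Finset.sum_range_succ, Nat.choose_succ_self]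
      have e1 := Finset.sum_range_succ' (fun s => (-1:ℚ)^s * (i.choose s) * ((m+s).choose j)) i
      simp only [pow_zero, Nat.choose_zero_right, Nat.cast_one, one_mul, mul_one, add_zero,
        Nat.cast_zero, mul_zero, zero_mul] at e1 ⊢
      have e2 : ∑ x ∈ Finset.range i, (-1:ℚ)^x * (i.choose (x+1)) * ((m+(x+1)).choose j)
          = -∑ x ∈ Finset.range i, (-1:ℚ)^(x+1) * (i.choose (x+1)) * ((m+(x+1)).choose j) := by
        rw [← Finset.sum_neg_distrib]
        exact Finset.sum_congr rfl (fun x _ => by rw [pow_succ]; ring)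
      rw [e2]
      linarith [e1]
    have hsplit : ∀ s : ℕ, ((-1:ℚ)^(s+1) * (((i+1).choose (s+1) : ℕ):ℚ) * (((m+(s+1)).choose j : ℕ):ℚ))
        = -((-1:ℚ)^s * ((i.choose s : ℕ):ℚ) * ((((m+1)+s).choose j : ℕ):ℚ))
          + -((-1:ℚ)^s * ((i.choose (s+1) : ℕ):ℚ) * (((m+(s+1)).choose j : ℕ):ℚ)) := by
      intro s
      have harg : (m+1)+s = m+(s+1) := by omega
      rw [Nat.choose_succ_succ, harg]
      push_cast [pow_succ]
      ring
    rw [Finset.sum_range_succ' (fun s => (-1:ℚ)^s * (((i+1).choose s : ℕ):ℚ) * (((m+s).choose j : ℕ):ℚ)) (i+1)]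
    rw [Finset.sum_congr rfl (fun s _ => hsplit s), Finset.sum_add_distrib,
      Finset.sum_neg_distrib, Finset.sum_neg_distrib, ih (m+1) j, hT, ih m j]
    simp only [pow_zero, Nat.choose_zero_right, Nat.cast_one, one_mul, add_zero]
    have hR : (if i ≤ j then (((m+1).choose (j - i) : ℕ) : ℚ) else 0)
        - (if i ≤ j then ((m.choose (j - i) : ℕ) : ℚ) else 0)
        = (if i + 1 ≤ j then ((m.choose (j - (i+1)) : ℕ) : ℚ) else 0) := by
      by_cases hij : i + 1 ≤ j
      · have hij' : i ≤ j := by omega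
        rw [if_pos hij', if_pos hij', if_pos hij]
        have h1 : j - i = (j - (i+1)) + 1 := by omega
        rw [h1, Nat.choose_succ_succ]
        push_cast
        ring
      · by_cases hij2 : i ≤ j
        · have : j - i = 0 := by omega
          rw [if_pos hij2, if_pos hij2, if_neg hij, this]
          simp
        · rw [if_neg hij2, if_neg hij2, if_neg hij]; ring
    rw [pow_succ]
    linear_combination (-(-1:ℚ)^i) * hR

/-- if `k ≤ -1` and `a_0,…,a_{α_t}` are the coefficients of `N(I,n)` in the
basis `(C(n+k, i))_i` of generalized binomial coefficients, then all `a_i` are nonnegative. -/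
theorem stmt_16 (I : Finset ℕ) (hI : I.Nonempty) (hIpos : ∀ x ∈ I, 1 ≤ x)
    (k : ℤ) (hk : k ≤ -1) (a : ℕ → ℚ)
    (ha : ∀ n : ℕ, 1 ≤ n →
      (Ncount I n : ℚ) =
        ∑ i ∈ Finset.range (I.sup id + 1), a i * genChoose ((n : ℤ) + k) i) :
    ∀ i ≤ I.sup id, 0 ≤ a i := by
  classical
  intro i hi
  obtain ⟨x, hx⟩ := hI
  have hl : 1 ≤ I.sup id := le_trans (hIpos x hx) (Finset.le_sup (f := id) hx)
  set ℓ := I.sup id with hℓ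
  set m0 : ℕ := (-1 - k).toNat with hm0
  have hm0' : (m0 : ℤ) = -1 - k := Int.toNat_of_nonneg (by omega)
  have hb : ∀ s : ℕ, (Ncount I (s + m0 + 1) : ℚ)
      = ∑ j ∈ Finset.range (ℓ+1), (bcoef I j : ℚ) * (((m0 + s).choose j : ℕ) : ℚ) := by
    intro s
    rw [ncount_formula I ⟨x, hx⟩ hIpos (s + m0 + 1) (by omega)]
    exact Finset.sum_congr rfl (fun j _ => by rw [show s + m0 + 1 - 1 = m0 + s by omega])
  have ha' : ∀ s : ℕ, (Ncount I (s + m0 + 1) : ℚ)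
      = ∑ i' ∈ Finset.range (ℓ+1), a i' * ((s.choose i' : ℕ) : ℚ) := by
    intro s
    rw [ha (s + m0 + 1) (by omega)]
    apply Finset.sum_congr rfl
    intro i' _
    congr 1
    rw [show ((s + m0 + 1 : ℕ) : ℤ) + k = ((s : ℕ) : ℤ) by push_cast; omega]
    exact genChoose_natCast s i'
  have hiR : i ∈ Finset.range (ℓ + 1) := Finset.mem_range.mpr (by omega)
  have hE1 : ∑ s ∈ Finset.range (i+1), (-1:ℚ)^s * (i.choose s) * (Ncount I (s+m0+1) : ℚ)
      = (-1:ℚ)^i * a i := by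
    calc ∑ s ∈ Finset.range (i+1), (-1:ℚ)^s * (i.choose s) * (Ncount I (s+m0+1) : ℚ)
        = ∑ s ∈ Finset.range (i+1), ∑ i' ∈ Finset.range (ℓ+1),
            a i' * ((-1:ℚ)^s * (i.choose s) * ((s.choose i' : ℕ) : ℚ)) := by
          apply Finset.sum_congr rfl; intro s _
          rw [ha' s, Finset.mul_sum]
          apply Finset.sum_congr rfl; intro i' _; ring
      _ = ∑ i' ∈ Finset.range (ℓ+1),
            a i' * ∑ s ∈ Finset.range (i+1), (-1:ℚ)^s * (i.choose s) * (((0 + s).choose i' : ℕ) : ℚ) := by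
          rw [Finset.sum_comm]
          apply Finset.sum_congr rfl; intro i' _
          rw [Finset.mul_sum]
          apply Finset.sum_congr rfl; intro s _
          rw [show (0:ℕ) + s = s by omega]
      _ = ∑ i' ∈ Finset.range (ℓ+1),
            a i' * ((-1:ℚ)^i * (if i ≤ i' then ((Nat.choose 0 (i' - i) : ℕ) : ℚ) else 0)) := by
          apply Finset.sum_congr rfl; intro i' _
          rw [keyK i 0 i']
      _ = (-1:ℚ)^i * a i := by
          rw [Finset.sum_eq_single i]
          · rw [if_pos (le_refl i), Nat.sub_self, Nat.choose_self]; push_cast; ring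
          · intro i' _ hne
            rcases lt_or_ge i' i with h | h
            · rw [if_neg (by omega)]; ring
            · rw [if_pos h, Nat.choose_eq_zero_of_lt (by omega)]; push_cast; ring
          · intro hni; exact absurd hiR hni
  have hE2 : ∑ s ∈ Finset.range (i+1), (-1:ℚ)^s * (i.choose s) * (Ncount I (s+m0+1) : ℚ)
      = ∑ j ∈ Finset.range (ℓ+1),
          (bcoef I j : ℚ) * ((-1:ℚ)^i * (if i ≤ j then ((m0.choose (j - i) : ℕ) : ℚ) else 0)) := by
    calc ∑ s ∈ Finset.range (i+1), (-1:ℚ)^s * (i.choose s) * (Ncount I (s+m0+1) : ℚ)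
        = ∑ s ∈ Finset.range (i+1), ∑ j ∈ Finset.range (ℓ+1),
            (bcoef I j : ℚ) * ((-1:ℚ)^s * (i.choose s) * (((m0 + s).choose j : ℕ) : ℚ)) := by
          apply Finset.sum_congr rfl; intro s _
          rw [hb s, Finset.mul_sum]
          apply Finset.sum_congr rfl; intro j _; ring
      _ = ∑ j ∈ Finset.range (ℓ+1),
            (bcoef I j : ℚ) * ∑ s ∈ Finset.range (i+1), (-1:ℚ)^s * (i.choose s) * (((m0 + s).choose j : ℕ) : ℚ) := by
          rw [Finset.sum_comm]
          apply Finset.sum_congr rfl; intro j _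
          rw [Finset.mul_sum]
      _ = _ := by
          apply Finset.sum_congr rfl; intro j _
          rw [keyK i m0 j]
  have hai : a i = ∑ j ∈ Finset.range (ℓ+1),
      (bcoef I j : ℚ) * (if i ≤ j then ((m0.choose (j - i) : ℕ) : ℚ) else 0) := by
    apply mul_left_cancel₀ (pow_ne_zero i (show (-1:ℚ) ≠ 0 by norm_num))
    rw [← hE1, hE2, Finset.mul_sum]
    apply Finset.sum_congr rfl; intro j _; ring
  rw [hai]
  apply Finset.sum_nonneg
  intro j _
  apply mul_nonneg (by positivity)
  split
  · positivity
  · exact le_refl 0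
end

section
/- Let k be an integer with k ≥ 0, and let a_0, a_1, …, a_{α_t} be the unique rational numbers such that N(I,n) = Σ_{i=0}^{α_t} a_i · C(n+k, i) for every positive integer n, where for an integer a and nonnegative integer i, C(a,i) = a(a−1)⋯(a−i+1)/i! denotes the generalized binomial coefficient. Then there exists an i with 0 ≤ i ≤ α_t such that a_i < 0. -/
open Finset

/-! ### Auxiliary material for Statement 17 -/

lemma prod_sub_choose (N i : ℕ) :
    (∏ j ∈ Finset.range i, ((N : ℚ) - (j : ℚ))) = (N.choose i : ℚ) * (Nat.factorial i : ℚ) := by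
  induction i with
  | zero => simp
  | succ i ih =>
    rw [Finset.prod_range_succ, ih]
    rcases lt_trichotomy i N with h | h | h
    · have key : N.choose (i + 1) * (i + 1) = N.choose i * (N - i) :=
        Nat.choose_succ_right_eq N i
      have keyQ : (N.choose (i + 1) : ℚ) * (i + 1) = (N.choose i : ℚ) * ((N : ℚ) - i) := by
        have : ((N.choose (i + 1) * (i + 1) : ℕ) : ℚ) = ((N.choose i * (N - i) : ℕ) : ℚ) := by
          exact_mod_cast congrArg (Nat.cast : ℕ → ℚ) key
        push_cast [Nat.cast_sub h.le] at this
        linarith [this]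
      rw [Nat.factorial_succ]
      push_cast
      nlinarith [keyQ]
    · subst h
      rw [Nat.choose_succ_self]
      push_cast
      ring
    · rw [Nat.choose_eq_zero_of_lt h, Nat.choose_eq_zero_of_lt (h.trans (Nat.lt_succ_self i))]
      push_cast
      ring

lemma genChoose_natCast_s17 (N i : ℕ) : genChoose (N : ℤ) i = (N.choose i : ℚ) := by
  unfold genChoose
  rw [show (((N : ℤ) : ℚ)) = (N : ℚ) by push_cast; ring, prod_sub_choose]
  have h : (Nat.factorial i : ℚ) ≠ 0 := by
    exact_mod_cast Nat.factorial_ne_zero i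
  field_simp

lemma altsum_choose (L : ℕ) : ∀ i c : ℕ, i < L →
    (∑ m ∈ Finset.range (L + 1), (-1 : ℚ) ^ m * (L.choose m : ℚ) * (((m + c).choose i : ℚ)))
      = 0 := by
  induction L with
  | zero => intro i c hi; omega
  | succ L ih =>
    intro i c hi
    match i with
    | 0 =>
      simp only [Nat.choose_zero_right, Nat.cast_one, mul_one]
      have h := Int.alternating_sum_range_choose_of_ne (Nat.succ_ne_zero L)
      have h2 := congrArg (Int.cast : ℤ → ℚ) h
      push_cast at h2
      convert h2 using 1
    | (i' + 1) =>
      have hi' : i' < L := by omega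
      -- abbreviate
      set h : ℕ → ℚ := fun m => (((m + c).choose (i' + 1) : ℕ) : ℚ) with hh
      have step1 : (∑ m ∈ Finset.range (L + 2),
            (-1 : ℚ) ^ m * ((L + 1).choose m : ℚ) * h m)
          = (∑ m ∈ Finset.range (L + 1),
              (-1 : ℚ) ^ (m + 1) * ((L + 1).choose (m + 1) : ℚ) * h (m + 1)) + h 0 := by
        rw [Finset.sum_range_succ' (fun m => (-1 : ℚ) ^ m * ((L + 1).choose m : ℚ) * h m) (L + 1)]
        simp
      have G1 : (∑ m ∈ Finset.range (L + 2), (-1 : ℚ) ^ m * (L.choose m : ℚ) * h m)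
          = (∑ m ∈ Finset.range (L + 1), (-1 : ℚ) ^ m * (L.choose m : ℚ) * h m) := by
        rw [Finset.sum_range_succ]
        rw [Nat.choose_eq_zero_of_lt (by omega : L < L + 1)]
        push_cast; ring
      have G2 : (∑ m ∈ Finset.range (L + 2), (-1 : ℚ) ^ m * (L.choose m : ℚ) * h m)
          = (∑ m ∈ Finset.range (L + 1),
              (-1 : ℚ) ^ (m + 1) * (L.choose (m + 1) : ℚ) * h (m + 1)) + h 0 := by
        rw [Finset.sum_range_succ' (fun m => (-1 : ℚ) ^ m * (L.choose m : ℚ) * h m) (L + 1)]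
        simp
      have hPascal : ∀ m : ℕ, ((L + 1).choose (m + 1) : ℚ)
          = (L.choose m : ℚ) + (L.choose (m + 1) : ℚ) := by
        intro m
        rw [show (L + 1).choose (m + 1) = L.choose m + L.choose (m + 1) from
          Nat.choose_succ_succ L m]
        push_cast; ring
      have hdiff : ∀ m : ℕ, h m - h (m + 1) = -(((m + c).choose i' : ℕ) : ℚ) := by
        intro m
        have : (m + 1 + c).choose (i' + 1) = (m + c).choose i' + (m + c).choose (i' + 1) := by
          rw [show m + 1 + c = (m + c) + 1 by ring]
          exact Nat.choose_succ_succ (m + c) i'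
        simp only [hh, this]
        push_cast; ring
      have main : (∑ m ∈ Finset.range (L + 2),
            (-1 : ℚ) ^ m * ((L + 1).choose m : ℚ) * h m)
          = (∑ m ∈ Finset.range (L + 1), (-1 : ℚ) ^ m * (L.choose m : ℚ) * (h m - h (m + 1))) := by
        rw [step1]
        have expand : (∑ m ∈ Finset.range (L + 1),
              (-1 : ℚ) ^ (m + 1) * ((L + 1).choose (m + 1) : ℚ) * h (m + 1))
            = (∑ m ∈ Finset.range (L + 1), -((-1 : ℚ) ^ m * (L.choose m : ℚ) * h (m + 1)))
              + (∑ m ∈ Finset.range (L + 1),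
                  (-1 : ℚ) ^ (m + 1) * (L.choose (m + 1) : ℚ) * h (m + 1)) := by
          rw [← Finset.sum_add_distrib]
          apply Finset.sum_congr rfl
          intro m _
          rw [hPascal m]
          ring
        rw [expand]
        have hA2 : (∑ m ∈ Finset.range (L + 1),
              (-1 : ℚ) ^ (m + 1) * (L.choose (m + 1) : ℚ) * h (m + 1))
            = (∑ m ∈ Finset.range (L + 1), (-1 : ℚ) ^ m * (L.choose m : ℚ) * h m) - h 0 := by
          rw [← G1, G2]; ring
        rw [hA2]
        have hsplit : (∑ m ∈ Finset.range (L + 1),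
              (-1 : ℚ) ^ m * (L.choose m : ℚ) * (h m - h (m + 1)))
            = (∑ m ∈ Finset.range (L + 1), (-1 : ℚ) ^ m * (L.choose m : ℚ) * h m)
              - (∑ m ∈ Finset.range (L + 1), (-1 : ℚ) ^ m * (L.choose m : ℚ) * h (m + 1)) := by
          rw [← Finset.sum_sub_distrib]
          apply Finset.sum_congr rfl
          intro m _; ring
        rw [hsplit]
        have hneg : (∑ m ∈ Finset.range (L + 1), -((-1 : ℚ) ^ m * (L.choose m : ℚ) * h (m + 1)))
            = -(∑ m ∈ Finset.range (L + 1), (-1 : ℚ) ^ m * (L.choose m : ℚ) * h (m + 1)) := by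
          rw [Finset.sum_neg_distrib]
        rw [hneg]
        ring
      rw [main]
      have : (∑ m ∈ Finset.range (L + 1), (-1 : ℚ) ^ m * (L.choose m : ℚ) * (h m - h (m + 1)))
          = -(∑ m ∈ Finset.range (L + 1),
              (-1 : ℚ) ^ m * (L.choose m : ℚ) * (((m + c).choose i' : ℕ) : ℚ)) := by
        rw [← Finset.sum_neg_distrib]
        apply Finset.sum_congr rfl
        intro m _
        rw [hdiff m]
        ring
      rw [this, ih i' c hi', neg_zero]

lemma altsum_shift (L i c : ℕ) (hi : i < L) :
    (∑ m ∈ Finset.range L, (-1 : ℚ) ^ m * (L.choose (m + 1) : ℚ) * (((m + 1 + c).choose i : ℚ)))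
      = (c.choose i : ℚ) := by
  have h0 := altsum_choose L i c hi
  rw [Finset.sum_range_succ'
    (fun m => (-1 : ℚ) ^ m * (L.choose m : ℚ) * (((m + c).choose i : ℚ))) L] at h0
  simp only [pow_succ, pow_zero, Nat.choose_zero_right, Nat.cast_one, one_mul, zero_add] at h0
  have : (∑ m ∈ Finset.range L,
        (-1 : ℚ) ^ m * (-1 : ℚ) * (L.choose (m + 1) : ℚ) * (((m + 1 + c).choose i : ℚ)))
      = -(∑ m ∈ Finset.range L,
        (-1 : ℚ) ^ m * (L.choose (m + 1) : ℚ) * (((m + 1 + c).choose i : ℚ))) := by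
    rw [← Finset.sum_neg_distrib]
    apply Finset.sum_congr rfl
    intro m _; ring
  rw [this] at h0
  linarith [h0]

/-- `M(I,n)`: sequences of length `α_t` with entries in `[1,n]` and descent set `I∖{α_t}`. -/
noncomputable def Mcount (I : Finset ℕ) (n : ℕ) : ℕ :=
  Set.ncard {v ∈ Seqs (I.sup id) n | Des (I.sup id) v = ↑(I.erase (I.sup id))}

lemma sup_pos (I : Finset ℕ) (hI : I.Nonempty) (hIpos : ∀ x ∈ I, 1 ≤ x) :
    1 ≤ I.sup id := by
  obtain ⟨x, hx⟩ := hI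
  exact le_trans (hIpos x hx) (Finset.le_sup (f := id) hx)

lemma Ncount_empty (n : ℕ) : Ncount (∅ : Finset ℕ) n = 1 := by
  unfold Ncount
  have hset : {v ∈ Seqs ((∅ : Finset ℕ).sup id) n |
      Des ((∅ : Finset ℕ).sup id) v = ↑((∅ : Finset ℕ).erase ((∅ : Finset ℕ).sup id)) ∧
      v ((∅ : Finset ℕ).sup id) ≠ 1} = {fun _ => 0} := by
    ext v
    simp only [Finset.sup_empty, Nat.bot_eq_zero, Finset.erase_empty, Finset.coe_empty,
      Set.mem_setOf_eq, Set.mem_singleton_iff]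
    constructor
    · rintro ⟨⟨-, h0⟩, -, -⟩
      funext i
      exact h0 i (by simp [Finset.mem_Icc])
    · rintro rfl
      refine ⟨⟨?_, ?_⟩, ?_, ?_⟩
      · intro i hi
        have := Finset.mem_Icc.mp hi
        omega
      · intro i _; rfl
      · ext i
        simp only [Des, Set.mem_setOf_eq, Set.mem_empty_iff_false, iff_false]
        rintro ⟨-, h, -⟩
        omega
      · simp
  rw [hset]
  exact Set.ncard_singleton _

lemma Ncount_one (I : Finset ℕ) (hI : I.Nonempty) (hIpos : ∀ x ∈ I, 1 ≤ x) :
    Ncount I 1 = 0 := by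
  unfold Ncount
  have hα1 : 1 ≤ I.sup id := sup_pos I hI hIpos
  have hset : {v ∈ Seqs (I.sup id) 1 |
      Des (I.sup id) v = ↑(I.erase (I.sup id)) ∧ v (I.sup id) ≠ 1} = ∅ := by
    ext v
    simp only [Set.mem_setOf_eq, Set.mem_empty_iff_false, iff_false]
    rintro ⟨hs, -, hne⟩
    have h := Finset.mem_Icc.mp (hs.1 (I.sup id) (Finset.mem_Icc.mpr ⟨hα1, le_rfl⟩))
    exact hne (by omega)
  rw [hset]
  exact Set.ncard_empty _

lemma Mcount_split (I : Finset ℕ) (hI : I.Nonempty) (hIpos : ∀ x ∈ I, 1 ≤ x)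
    (n : ℕ) (hn : 1 ≤ n) :
    Mcount I n = Ncount I n + Ncount (I.erase (I.sup id)) n := by
  classical
  unfold Mcount Ncount
  set α := I.sup id with hαdef
  set J := I.erase α with hJdef
  set r := J.sup id with hrdef
  have hα1 : 1 ≤ α := sup_pos I hI hIpos
  have hJub : ∀ x ∈ J, x ≤ r := fun x hx => Finset.le_sup (f := id) hx
  have hJpos : ∀ x ∈ J, 1 ≤ x := fun x hx => hIpos x (Finset.mem_of_mem_erase hx)
  have hrα : r < α := by
    rcases J.eq_empty_or_nonempty with hJe | hJne
    · rw [hrdef, hJe]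
      simp; omega
    · obtain ⟨b, hb, hbe⟩ := Finset.exists_mem_eq_sup J hJne id
      have hbI : b ∈ I := Finset.mem_of_mem_erase hb
      have hbne : b ≠ α := Finset.ne_of_mem_erase hb
      have hbα : b ≤ α := Finset.le_sup (f := id) hbI
      rw [hrdef, hbe]
      simp only [id]
      omega
  have hrJ : 1 ≤ r → r ∈ J := by
    intro h1
    rcases J.eq_empty_or_nonempty with hJe | hJne
    · exfalso
      rw [hrdef, hJe] at h1
      simp at h1
    · obtain ⟨b, hb, hbe⟩ := Finset.exists_mem_eq_sup J hJne id
      rw [hrdef, hbe]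
      exact hb
  set P1 : Set (ℕ → ℕ) := {v ∈ Seqs α n | Des α v = ↑J ∧ v α ≠ 1} with hP1
  set P2 : Set (ℕ → ℕ) := {v ∈ Seqs α n | Des α v = ↑J ∧ v α = 1} with hP2
  have hPu : {v ∈ Seqs α n | Des α v = ↑J} = P1 ∪ P2 := by
    ext v
    simp only [hP1, hP2, Set.mem_setOf_eq, Set.mem_union]
    by_cases h : v α = 1 <;> tauto
  have hfin : (Seqs α n).Finite := seqs_finite α n
  have hP1f : P1.Finite := hfin.subset (fun v hv => hv.1)
  have hP2f : P2.Finite := hfin.subset (fun v hv => hv.1)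
  have hdisj : Disjoint P1 P2 := by
    rw [Set.disjoint_left]
    rintro v ⟨-, -, h1⟩ ⟨-, -, h2⟩
    exact h1 h2
  have hones : ∀ v ∈ P2, ∀ i, r < i → i ≤ α → v i = 1 := by
    intro v hv
    obtain ⟨hvS, hvD, hv1⟩ := hv
    have key : ∀ d i, i + d = α → r < i → v i = 1 := by
      intro d
      induction d with
      | zero =>
        intro i hid _
        have : i = α := by omega
        rw [this]; exact hv1
      | succ d ihd =>
        intro i hid hir
        have h1i : 1 ≤ i := by omega
        have hiα : i < α := by omega
        have hnotJ : i ∉ Des α v := by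
          rw [hvD]
          intro hmem
          have hiJ : i ∈ J := by exact_mod_cast hmem
          have := hJub i hiJ
          omega
        have hle : v i ≤ v (i + 1) := by
          by_contra hcon
          exact hnotJ ⟨h1i, hiα, by omega⟩
        have hnext : v (i + 1) = 1 := ihd (i + 1) (by omega) (by omega)
        have hvi : 1 ≤ v i :=
          (Finset.mem_Icc.mp (hvS.1 i (Finset.mem_Icc.mpr ⟨h1i, by omega⟩))).1
        omega
    intro i hir hiα
    exact key (α - i) i (by omega) hir
  set tr : (ℕ → ℕ) → (ℕ → ℕ) := fun v i => if i ≤ r then v i else 0 with htr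
  have hinj : Set.InjOn tr P2 := by
    intro v hv w hw hvw
    funext i
    by_cases h0 : i = 0
    · subst h0
      rw [hv.1.2 0 (by simp [Finset.mem_Icc]), hw.1.2 0 (by simp [Finset.mem_Icc])]
    by_cases hle : i ≤ r
    · have := congrFun hvw i
      simpa [htr, hle] using this
    · by_cases hiα : i ≤ α
      · rw [hones v hv i (by omega) hiα, hones w hw i (by omega) hiα]
      · rw [hv.1.2 i (by simp [Finset.mem_Icc]; omega), hw.1.2 i (by simp [Finset.mem_Icc]; omega)]
  have himg : tr '' P2 = {w ∈ Seqs r n | Des r w = ↑(J.erase r) ∧ w r ≠ 1} := by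
    ext w
    simp only [Set.mem_image, Set.mem_setOf_eq]
    constructor
    · rintro ⟨v, hv, rfl⟩
      obtain ⟨⟨hvm, hvz⟩, hvD, hv1⟩ := hv
      have hvP2 : v ∈ P2 := ⟨⟨hvm, hvz⟩, hvD, hv1⟩
      refine ⟨⟨?_, ?_⟩, ?_, ?_⟩
      · intro i hi
        have hi' := Finset.mem_Icc.mp hi
        have hmem : i ∈ Finset.Icc 1 α := Finset.mem_Icc.mpr ⟨hi'.1, by omega⟩
        simpa [htr, hi'.2] using hvm i hmem
      · intro i hi
        have hi' : ¬(1 ≤ i ∧ i ≤ r) := by simpa [Finset.mem_Icc] using hi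
        by_cases hir : i ≤ r
        · have h0 : i = 0 := by omega
          subst h0
          simp [htr, hvz 0 (by simp [Finset.mem_Icc])]
        · simp [htr, hir]
      · ext x
        simp only [Des, Set.mem_setOf_eq, Finset.coe_erase, Set.mem_diff, Finset.mem_coe,
          Set.mem_singleton_iff]
        constructor
        · rintro ⟨h1, h2, h3⟩
          have hxr : x ≤ r := by omega
          have hx1r : x + 1 ≤ r := by omega
          have h3' : v (x + 1) < v x := by simpa [htr, hxr, hx1r] using h3
          have hmem : x ∈ Des α v := ⟨h1, by omega, h3'⟩
          rw [hvD] at hmem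
          exact ⟨by exact_mod_cast hmem, by omega⟩
        · rintro ⟨hxJ, hxr⟩
          have hxJ' : x ∈ J := by exact_mod_cast hxJ
          have h1 : 1 ≤ x := hJpos x hxJ'
          have hxle : x ≤ r := hJub x hxJ'
          have hxlt : x < r := by
            rcases Nat.lt_or_ge x r with h | h
            · exact h
            · exact absurd (le_antisymm hxle h) hxr
          have hmem : x ∈ Des α v := by
            rw [hvD]
            exact_mod_cast hxJ'
          obtain ⟨-, -, h3⟩ := hmem
          exact ⟨h1, hxlt, by simpa [htr, hxle, (by omega : x + 1 ≤ r)] using h3⟩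
      · by_cases h1r : 1 ≤ r
        · have hrJ' := hrJ h1r
          have hmem : r ∈ Des α v := by
            rw [hvD]
            exact_mod_cast hrJ'
          obtain ⟨-, hrlt, h3⟩ := hmem
          have hr1 : v (r + 1) = 1 := hones v hvP2 (r + 1) (by omega) (by omega)
          simp only [htr, if_pos (le_refl r)]
          omega
        · have hr0 : r = 0 := by omega
          simp only [htr, hr0, if_pos (Nat.le_refl 0)]
          rw [hvz 0 (by simp [Finset.mem_Icc])]
          omega
    · rintro ⟨⟨hwm, hwz⟩, hwD, hw1⟩
      refine ⟨fun i => if i ≤ r then w i else if i ≤ α then 1 else 0, ?_, ?_⟩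
      · refine ⟨⟨?_, ?_⟩, ?_, ?_⟩
        · intro i hi
          have hi' := Finset.mem_Icc.mp hi
          by_cases hir : i ≤ r
          · simpa [hir] using hwm i (Finset.mem_Icc.mpr ⟨hi'.1, hir⟩)
          · simp only [if_neg hir, if_pos hi'.2]
            exact Finset.mem_Icc.mpr ⟨le_rfl, hn⟩
        · intro i hi
          have hi' : ¬(1 ≤ i ∧ i ≤ α) := by simpa [Finset.mem_Icc] using hi
          by_cases hir : i ≤ r
          · have h0 : i = 0 := by omega
            subst h0
            simp [hwz 0 (by simp [Finset.mem_Icc])]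
          · have hiα : ¬ i ≤ α := by omega
            simp [hir, hiα]
        · ext x
          simp only [Des, Set.mem_setOf_eq, Finset.mem_coe]
          constructor
          · rintro ⟨h1, h2, h3⟩
            rcases Nat.lt_trichotomy x r with hx | hx | hx
            · have hx1 : x + 1 ≤ r := by omega
              have h3' : w (x + 1) < w x := by
                simpa [if_pos hx.le, if_pos hx1, hx] using h3
              have hmem : x ∈ Des r w := ⟨h1, hx, h3'⟩
              rw [hwD] at hmem
              have : x ∈ J.erase r := by exact_mod_cast hmem
              exact Finset.mem_of_mem_erase this
            · subst hx
              exact hrJ h1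
            · exfalso
              have hxα : x ≤ α := by omega
              have hx1r : ¬ x + 1 ≤ r := by omega
              have hxr : ¬ x ≤ r := by omega
              by_cases hx1α : x + 1 ≤ α
              · simp only [if_neg hx1r, if_neg hxr, if_pos hxα, if_pos hx1α] at h3
                omega
              · omega
          · intro hxJ
            have h1 : 1 ≤ x := hJpos x hxJ
            have hxle : x ≤ r := hJub x hxJ
            refine ⟨h1, by omega, ?_⟩
            rcases Nat.lt_or_ge x r with hx | hx
            · have hmem : x ∈ Des r w := by
                rw [hwD]
                have : x ∈ J.erase r := Finset.mem_erase.mpr ⟨by omega, hxJ⟩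
                exact_mod_cast this
              obtain ⟨-, -, h3⟩ := hmem
              simpa [if_pos hx.le, if_pos (by omega : x + 1 ≤ r), hx] using h3
            · have hxeq : x = r := le_antisymm hxle hx
              have hwr : 1 ≤ w x := (Finset.mem_Icc.mp (hwm x (Finset.mem_Icc.mpr ⟨h1, hxle⟩))).1
              have hwne : w x ≠ 1 := by rw [hxeq]; exact hw1
              have hx1r : ¬ x + 1 ≤ r := by omega
              simp only [if_neg hx1r, if_pos hxle, if_pos (by omega : x + 1 ≤ α)]
              omega
        · have hαr : ¬ α ≤ r := by omega
          simp [hαr]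
      · funext i
        by_cases hir : i ≤ r
        · simp [htr, hir]
        · simp only [htr, if_neg hir]
          rw [hwz i (by simp [Finset.mem_Icc]; omega)]
  have hcard2 : P2.ncard = Set.ncard {w ∈ Seqs r n | Des r w = ↑(J.erase r) ∧ w r ≠ 1} := by
    rw [← himg]
    exact (Set.ncard_image_of_injOn hinj).symm
  rw [hPu, Set.ncard_union_eq hdisj hP1f hP2f, hcard2]

lemma Mcount_zero (I : Finset ℕ) (hI : I.Nonempty) (hIpos : ∀ x ∈ I, 1 ≤ x) :
    Mcount I 0 = 0 := by
  unfold Mcount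
  have hα1 : 1 ≤ I.sup id := sup_pos I hI hIpos
  have hset : {v ∈ Seqs (I.sup id) 0 | Des (I.sup id) v = ↑(I.erase (I.sup id))} = ∅ := by
    ext v
    simp only [Set.mem_setOf_eq, Set.mem_empty_iff_false, iff_false]
    rintro ⟨hs, -⟩
    have := Finset.mem_Icc.mp (hs.1 (I.sup id) (Finset.mem_Icc.mpr ⟨hα1, le_rfl⟩))
    omega
  rw [hset]
  exact Set.ncard_empty _

lemma ncard_AT (I : Finset ℕ) (hI : I.Nonempty) (hIpos : ∀ x ∈ I, 1 ≤ x)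
    (L : ℕ) (T : Finset ℕ) (hT : T ⊆ Finset.Icc 1 L) :
    Set.ncard {w ∈ Seqs (I.sup id) L |
      Des (I.sup id) w = ↑(I.erase (I.sup id)) ∧ ∀ i ∈ Finset.Icc 1 (I.sup id), w i ∈ T}
      = Mcount I T.card := by
  classical
  set α := I.sup id with hαdef
  set J := I.erase α with hJdef
  have hα1 : 1 ≤ α := sup_pos I hI hIpos
  rcases Nat.eq_zero_or_pos T.card with hm0 | hmpos
  · have hT0 : T = ∅ := Finset.card_eq_zero.mp hm0
    have h1 : {w ∈ Seqs α L | Des α w = ↑J ∧ ∀ i ∈ Finset.Icc 1 α, w i ∈ T}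
        = (∅ : Set (ℕ → ℕ)) := by
      ext w
      simp only [Set.mem_setOf_eq, Set.mem_empty_iff_false, iff_false]
      rintro ⟨-, -, hmem⟩
      have := hmem 1 (Finset.mem_Icc.mpr ⟨le_rfl, hα1⟩)
      simp [hT0] at this
    rw [h1, Set.ncard_empty, hm0, Mcount_zero I hI hIpos]
  · set m := T.card with hmdef
    have hmT : T.card = m := rfl
    set emb : Fin m ↪o ℕ := T.orderEmbOfFin hmT with hembdef
    set emap : ℕ → ℕ := fun j => if h : j - 1 < m then (emb ⟨j - 1, h⟩ : ℕ) else 0 with hemap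
    have hememT : ∀ j, 1 ≤ j → j ≤ m → emap j ∈ T := by
      intro j h1 h2
      have hlt : j - 1 < m := by omega
      simp only [hemap, dif_pos hlt]
      exact Finset.orderEmbOfFin_mem T hmT _
    have hlt_iff : ∀ j j', 1 ≤ j → j ≤ m → 1 ≤ j' → j' ≤ m → (emap j < emap j' ↔ j < j') := by
      intro j j' h1 h2 h3 h4
      have hj : j - 1 < m := by omega
      have hj' : j' - 1 < m := by omega
      simp only [hemap, dif_pos hj, dif_pos hj']
      rw [emb.lt_iff_lt, Fin.mk_lt_mk]
      omega
    have heq_iff : ∀ j j', 1 ≤ j → j ≤ m → 1 ≤ j' → j' ≤ m → emap j = emap j' → j = j' := by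
      intro j j' h1 h2 h3 h4 heq
      rcases Nat.lt_trichotomy j j' with h | h | h
      · have := (hlt_iff j j' h1 h2 h3 h4).mpr h
        omega
      · exact h
      · have := (hlt_iff j' j h3 h4 h1 h2).mpr h
        omega
    have hsurjT : ∀ t ∈ T, ∃ j, (1 ≤ j ∧ j ≤ m) ∧ emap j = t := by
      intro t ht
      have hrange : t ∈ Set.range emb := by
        rw [Finset.range_orderEmbOfFin]
        exact_mod_cast ht
      obtain ⟨q, hq⟩ := hrange
      have hqlt := q.isLt
      refine ⟨q.val + 1, ⟨by omega, by omega⟩, ?_⟩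
      have hlt : q.val + 1 - 1 < m := by omega
      simp only [hemap, dif_pos hlt]
      rw [show (⟨q.val + 1 - 1, hlt⟩ : Fin m) = q by ext; simp]
      exact hq
    set f : (ℕ → ℕ) → (ℕ → ℕ) := fun v i => if 1 ≤ i ∧ i ≤ α then emap (v i) else 0 with hf
    set Mset : Set (ℕ → ℕ) := {v ∈ Seqs α m | Des α v = ↑J} with hMset
    have hvbound : ∀ v ∈ Mset, ∀ i, 1 ≤ i → i ≤ α → 1 ≤ v i ∧ v i ≤ m := by
      intro v hv i h1 h2
      exact Finset.mem_Icc.mp (hv.1.1 i (Finset.mem_Icc.mpr ⟨h1, h2⟩))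
    have himg : f '' Mset = {w ∈ Seqs α L | Des α w = ↑J ∧ ∀ i ∈ Finset.Icc 1 α, w i ∈ T} := by
      ext w
      simp only [Set.mem_image, Set.mem_setOf_eq]
      constructor
      · rintro ⟨v, hv, rfl⟩
        obtain ⟨⟨hvm, hvz⟩, hvD⟩ := hv
        have hvMset : v ∈ Mset := ⟨⟨hvm, hvz⟩, hvD⟩
        refine ⟨⟨?_, ?_⟩, ?_, ?_⟩
        · intro i hi
          obtain ⟨h1, h2⟩ := Finset.mem_Icc.mp hi
          obtain ⟨hb1, hb2⟩ := hvbound v hvMset i h1 h2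
          have hmem : emap (v i) ∈ T := hememT _ hb1 hb2
          simp only [hf, if_pos (And.intro h1 h2)]
          exact hT hmem
        · intro i hi
          have : ¬(1 ≤ i ∧ i ≤ α) := by simpa [Finset.mem_Icc] using hi
          simp [hf, this]
        · ext x
          simp only [Des, Set.mem_setOf_eq]
          constructor
          · rintro ⟨h1, h2, h3⟩
            have hx : 1 ≤ x ∧ x ≤ α := ⟨h1, by omega⟩
            have hx1 : 1 ≤ x + 1 ∧ x + 1 ≤ α := ⟨by omega, by omega⟩
            simp only [hf, if_pos hx, if_pos hx1] at h3
            obtain ⟨ha1, ha2⟩ := hvbound v hvMset x hx.1 hx.2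
            obtain ⟨hb1, hb2⟩ := hvbound v hvMset (x + 1) hx1.1 hx1.2
            have h3' : v (x + 1) < v x := (hlt_iff _ _ hb1 hb2 ha1 ha2).mp h3
            have hmem : x ∈ Des α v := ⟨h1, h2, h3'⟩
            rw [hvD] at hmem
            exact hmem
          · intro hxJ
            have hmem : x ∈ Des α v := by rw [hvD]; exact hxJ
            obtain ⟨h1, h2, h3⟩ := hmem
            have hx : 1 ≤ x ∧ x ≤ α := ⟨h1, by omega⟩
            have hx1 : 1 ≤ x + 1 ∧ x + 1 ≤ α := ⟨by omega, by omega⟩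
            refine ⟨h1, h2, ?_⟩
            simp only [hf, if_pos hx, if_pos hx1]
            obtain ⟨ha1, ha2⟩ := hvbound v hvMset x hx.1 hx.2
            obtain ⟨hb1, hb2⟩ := hvbound v hvMset (x + 1) hx1.1 hx1.2
            exact (hlt_iff _ _ hb1 hb2 ha1 ha2).mpr h3
        · intro i hi
          obtain ⟨h1, h2⟩ := Finset.mem_Icc.mp hi
          obtain ⟨hb1, hb2⟩ := hvbound v hvMset i h1 h2
          simp only [hf, if_pos (And.intro h1 h2)]
          exact hememT _ hb1 hb2
      · rintro ⟨⟨hwm, hwz⟩, hwD, hwT⟩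
        have hchoice : ∀ t : ℕ, ∃ j, t ∈ T → ((1 ≤ j ∧ j ≤ m) ∧ emap j = t) := by
          intro t
          by_cases ht : t ∈ T
          · obtain ⟨j, hj⟩ := hsurjT t ht
            exact ⟨j, fun _ => hj⟩
          · exact ⟨0, fun h => absurd h ht⟩
        choose g hg using hchoice
        have hwiT : ∀ i, 1 ≤ i → i ≤ α → w i ∈ T :=
          fun i h1 h2 => hwT i (Finset.mem_Icc.mpr ⟨h1, h2⟩)
        have hglt : ∀ s t, s ∈ T → t ∈ T → (g s < g t ↔ s < t) := by
          intro s t hs ht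
          have h1 := hg s hs
          have h2 := hg t ht
          have := hlt_iff (g s) (g t) h1.1.1 h1.1.2 h2.1.1 h2.1.2
          rw [h1.2, h2.2] at this
          exact this.symm
        refine ⟨fun i => if 1 ≤ i ∧ i ≤ α then g (w i) else 0, ⟨⟨?_, ?_⟩, ?_⟩, ?_⟩
        · intro i hi
          obtain ⟨h1, h2⟩ := Finset.mem_Icc.mp hi
          simp only [if_pos (And.intro h1 h2)]
          have := (hg (w i) (hwiT i h1 h2)).1
          exact Finset.mem_Icc.mpr this
        · intro i hi
          have : ¬(1 ≤ i ∧ i ≤ α) := by simpa [Finset.mem_Icc] using hi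
          simp [this]
        · ext x
          simp only [Des, Set.mem_setOf_eq]
          constructor
          · rintro ⟨h1, h2, h3⟩
            have hx : 1 ≤ x ∧ x ≤ α := ⟨h1, by omega⟩
            have hx1 : 1 ≤ x + 1 ∧ x + 1 ≤ α := ⟨by omega, by omega⟩
            simp only [if_pos hx, if_pos hx1] at h3
            have h3' : w (x + 1) < w x :=
              (hglt _ _ (hwiT _ hx1.1 hx1.2) (hwiT _ hx.1 hx.2)).mp h3
            have hmem : x ∈ Des α w := ⟨h1, h2, h3'⟩
            rw [hwD] at hmem
            exact hmem
          · intro hxJ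
            have hmem : x ∈ Des α w := by rw [hwD]; exact hxJ
            obtain ⟨h1, h2, h3⟩ := hmem
            have hx : 1 ≤ x ∧ x ≤ α := ⟨h1, by omega⟩
            have hx1 : 1 ≤ x + 1 ∧ x + 1 ≤ α := ⟨by omega, by omega⟩
            refine ⟨h1, h2, ?_⟩
            simp only [if_pos hx, if_pos hx1]
            exact (hglt _ _ (hwiT _ hx1.1 hx1.2) (hwiT _ hx.1 hx.2)).mpr h3
        · funext i
          by_cases hi : 1 ≤ i ∧ i ≤ α
          · simp only [hf, if_pos hi]
            exact (hg (w i) (hwiT i hi.1 hi.2)).2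
          · simp only [hf, if_neg hi]
            rw [hwz i (by simp [Finset.mem_Icc]; omega)]
    have hinj : Set.InjOn f Mset := by
      intro v hv v' hv' hvv
      funext i
      by_cases hi : 1 ≤ i ∧ i ≤ α
      · have := congrFun hvv i
        simp only [hf, if_pos hi] at this
        obtain ⟨ha1, ha2⟩ := hvbound v hv i hi.1 hi.2
        obtain ⟨hb1, hb2⟩ := hvbound v' hv' i hi.1 hi.2
        exact heq_iff _ _ ha1 ha2 hb1 hb2 this
      · rw [hv.1.2 i (by simp [Finset.mem_Icc]; omega),
          hv'.1.2 i (by simp [Finset.mem_Icc]; omega)]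
    rw [← himg, Set.ncard_image_of_injOn hinj]
    rfl

lemma card_superset_filter (U S : Finset ℕ) (h : S ⊆ U) :
    ((U.powerset.filter (fun T => S ⊆ T)).card) = 2 ^ (U.card - S.card) := by
  classical
  have hkey : ((U \ S).powerset).card = 2 ^ (U.card - S.card) := by
    rw [Finset.card_powerset, Finset.card_sdiff_of_subset h]
  rw [← hkey]
  apply Finset.card_bij' (fun T _ => T \ S) (fun V _ => V ∪ S)
  · intro T hT
    obtain ⟨hT1, hT2⟩ := Finset.mem_filter.mp hT
    have hTU : T ⊆ U := Finset.mem_powerset.mp hT1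
    refine Finset.mem_powerset.mpr ?_
    intro x hx
    obtain ⟨hx1, hx2⟩ := Finset.mem_sdiff.mp hx
    exact Finset.mem_sdiff.mpr ⟨hTU hx1, hx2⟩
  · intro V hV
    have hVU : V ⊆ U \ S := Finset.mem_powerset.mp hV
    refine Finset.mem_filter.mpr ⟨Finset.mem_powerset.mpr ?_, Finset.subset_union_right⟩
    intro x hx
    rcases Finset.mem_union.mp hx with hx | hx
    · exact (Finset.mem_sdiff.mp (hVU hx)).1
    · exact h hx
  · intro T hT
    obtain ⟨-, hT2⟩ := Finset.mem_filter.mp hT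
    exact Finset.sdiff_union_of_subset hT2
  · intro V hV
    have hVU : V ⊆ U \ S := Finset.mem_powerset.mp hV
    ext x
    simp only [Finset.mem_sdiff, Finset.mem_union]
    constructor
    · rintro ⟨hx | hx, hxS⟩
      · exact hx
      · exact absurd hx hxS
    · intro hx
      exact ⟨Or.inl hx, (Finset.mem_sdiff.mp (hVU hx)).2⟩

lemma even_M (I : Finset ℕ) (hI : I.Nonempty) (hIpos : ∀ x ∈ I, 1 ≤ x)
    (L : ℕ) (hL : I.sup id + 1 ≤ L) :
    Even (∑ m ∈ Finset.range L, L.choose (m + 1) * Mcount I (m + 1)) := by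
  classical
  set α := I.sup id with hαdef
  set J := I.erase α with hJdef
  have hα1 : 1 ≤ α := sup_pos I hI hIpos
  have hWfin : ({w ∈ Seqs α L | Des α w = ↑J} : Set (ℕ → ℕ)).Finite :=
    (seqs_finite α L).subset (fun w hw => hw.1)
  set Wfin := hWfin.toFinset with hWdef
  set A : Finset ℕ → Finset (ℕ → ℕ) :=
    fun T => Wfin.filter (fun w => ∀ i ∈ Finset.Icc 1 α, w i ∈ T) with hA
  have hAncard : ∀ T ∈ (Finset.Icc 1 L).powerset, (A T).card = Mcount I T.card := by
    intro T hT
    have hT' : T ⊆ Finset.Icc 1 L := Finset.mem_powerset.mp hT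
    rw [← ncard_AT I hI hIpos L T hT']
    have hset : {w ∈ Seqs α L | Des α w = ↑J ∧ ∀ i ∈ Finset.Icc 1 α, w i ∈ T}
        = ↑(A T) := by
      ext w
      simp only [hA, Finset.coe_filter, Set.mem_setOf_eq, hWdef, Set.Finite.mem_toFinset]
      constructor
      · rintro ⟨hs, hd, hm⟩
        exact ⟨⟨hs, hd⟩, hm⟩
      · rintro ⟨⟨hs, hd⟩, hm⟩
        exact ⟨hs, hd, hm⟩
    rw [hset, Set.ncard_coe_finset]
  have hshift : (∑ m ∈ Finset.range L, L.choose (m + 1) * Mcount I (m + 1))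
      = ∑ m ∈ Finset.range (L + 1), L.choose m * Mcount I m := by
    rw [Finset.sum_range_succ' (fun m => L.choose m * Mcount I m) L]
    rw [Mcount_zero I hI hIpos]
    simp
  have hmap : ∀ T ∈ (Finset.Icc 1 L).powerset, T.card ∈ Finset.range (L + 1) := by
    intro T hT
    have := Finset.card_le_card (Finset.mem_powerset.mp hT)
    rw [Nat.card_Icc] at this
    exact Finset.mem_range.mpr (by omega)
  have hps : (∑ m ∈ Finset.range (L + 1), L.choose m * Mcount I m)
      = ∑ T ∈ (Finset.Icc 1 L).powerset, (A T).card := by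
    rw [← Finset.sum_fiberwise_of_maps_to hmap (fun T => (A T).card)]
    apply Finset.sum_congr rfl
    intro m _
    have hconst : ∀ T ∈ (Finset.Icc 1 L).powerset.filter (fun T => T.card = m),
        (A T).card = Mcount I m := by
      intro T hT
      obtain ⟨hT1, hT2⟩ := Finset.mem_filter.mp hT
      rw [hAncard T hT1, hT2]
    rw [Finset.sum_congr rfl hconst, Finset.sum_const, ← Finset.powersetCard_eq_filter,
      Finset.card_powersetCard, Nat.card_Icc]
    simp only [Nat.add_sub_cancel, smul_eq_mul]
  have hswap : (∑ T ∈ (Finset.Icc 1 L).powerset, (A T).card)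
      = ∑ w ∈ Wfin, ((Finset.Icc 1 L).powerset.filter
          (fun T => ∀ i ∈ Finset.Icc 1 α, w i ∈ T)).card := by
    calc (∑ T ∈ (Finset.Icc 1 L).powerset, (A T).card)
        = ∑ T ∈ (Finset.Icc 1 L).powerset, ∑ w ∈ Wfin,
            (if ∀ i ∈ Finset.Icc 1 α, w i ∈ T then 1 else 0) := by
          apply Finset.sum_congr rfl
          intro T _
          simp only [hA]
          rw [Finset.card_filter]
      _ = ∑ w ∈ Wfin, ∑ T ∈ (Finset.Icc 1 L).powerset,
            (if ∀ i ∈ Finset.Icc 1 α, w i ∈ T then 1 else 0) := Finset.sum_comm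
      _ = ∑ w ∈ Wfin, ((Finset.Icc 1 L).powerset.filter
            (fun T => ∀ i ∈ Finset.Icc 1 α, w i ∈ T)).card := by
          apply Finset.sum_congr rfl
          intro w _
          rw [Finset.card_filter]
  have hterm : ∀ w ∈ Wfin, ((Finset.Icc 1 L).powerset.filter
      (fun T => ∀ i ∈ Finset.Icc 1 α, w i ∈ T)).card
        = 2 ^ (L - ((Finset.Icc 1 α).image w).card) := by
    intro w hw
    have hwW := (Set.Finite.mem_toFinset hWfin).mp hw
    have hSsub : (Finset.Icc 1 α).image w ⊆ Finset.Icc 1 L := by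
      rw [Finset.image_subset_iff]
      intro i hi
      exact hwW.1.1 i hi
    have hfun : (Finset.Icc 1 L).powerset.filter (fun T => ∀ i ∈ Finset.Icc 1 α, w i ∈ T)
        = (Finset.Icc 1 L).powerset.filter (fun T => (Finset.Icc 1 α).image w ⊆ T) := by
      ext T
      simp only [Finset.mem_filter]
      constructor
      · rintro ⟨h1, h2⟩
        exact ⟨h1, Finset.image_subset_iff.mpr h2⟩
      · rintro ⟨h1, h2⟩
        exact ⟨h1, Finset.image_subset_iff.mp h2⟩
    rw [hfun, card_superset_filter _ _ hSsub, Nat.card_Icc, Nat.add_sub_cancel]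
  rw [hshift, hps, hswap]
  have hfinal : (∑ w ∈ Wfin, ((Finset.Icc 1 L).powerset.filter
      (fun T => ∀ i ∈ Finset.Icc 1 α, w i ∈ T)).card)
      = ∑ w ∈ Wfin, 2 ^ (L - ((Finset.Icc 1 α).image w).card) :=
    Finset.sum_congr rfl hterm
  rw [hfinal, even_iff_two_dvd]
  apply Finset.dvd_sum
  intro w _
  clear_value A Wfin
  clear hA hAncard hps hswap hfinal hterm hshift hmap hWdef
  have hcb : ((Finset.Icc 1 α).image w).card ≤ α := by
    have h1 : ((Finset.Icc 1 α).image w).card ≤ (Finset.Icc 1 α).card := Finset.card_image_le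
    rw [Nat.card_Icc] at h1
    omega
  exact dvd_pow_self 2 (by omega)

lemma odd_empty (L : ℕ) (hL : 1 ≤ L) :
    Odd (∑ m ∈ Finset.range L, L.choose (m + 1) * Ncount (∅ : Finset ℕ) (m + 1)) := by
  have hsum : (∑ m ∈ Finset.range L, L.choose (m + 1) * Ncount (∅ : Finset ℕ) (m + 1))
      = ∑ m ∈ Finset.range L, L.choose (m + 1) := by
    apply Finset.sum_congr rfl
    intro m _
    rw [Ncount_empty, mul_one]
  have h2 : (∑ m ∈ Finset.range (L + 1), L.choose m) = 2 ^ L := Nat.sum_range_choose L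
  rw [Finset.sum_range_succ' (fun m => L.choose m) L] at h2
  simp only [Nat.choose_zero_right] at h2
  have hpow : 2 ∣ 2 ^ L := dvd_pow_self 2 (by omega)
  have hpos : 1 ≤ 2 ^ L := Nat.one_le_two_pow
  rw [hsum, Nat.odd_iff]
  omega

lemma odd_sumN (c : ℕ) : ∀ I : Finset ℕ, I.card ≤ c → (∀ x ∈ I, 1 ≤ x) →
    ∀ L : ℕ, I.sup id + 1 ≤ L →
    Odd (∑ m ∈ Finset.range L, L.choose (m + 1) * Ncount I (m + 1)) := by
  induction c with
  | zero =>
    intro I hc hpos L hL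
    have hIe : I = ∅ := Finset.card_eq_zero.mp (le_antisymm hc (Nat.zero_le _))
    subst hIe
    exact odd_empty L (by simpa using hL)
  | succ c ih =>
    intro I hc hpos L hL
    rcases I.eq_empty_or_nonempty with rfl | hne
    · exact odd_empty L (by simpa using hL)
    · have hsupmem : I.sup id ∈ I := by
        obtain ⟨b, hb, hbe⟩ := Finset.exists_mem_eq_sup I hne id
        rw [hbe]; exact hb
      have hJpos : ∀ x ∈ I.erase (I.sup id), 1 ≤ x :=
        fun x hx => hpos x (Finset.mem_of_mem_erase hx)
      have hJcard : (I.erase (I.sup id)).card ≤ c := by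
        rw [Finset.card_erase_of_mem hsupmem]
        have : 1 ≤ I.card := Finset.card_pos.mpr hne
        omega
      have hJsup : (I.erase (I.sup id)).sup id + 1 ≤ L := by
        have : (I.erase (I.sup id)).sup id ≤ I.sup id :=
          Finset.sup_mono (Finset.erase_subset _ _)
        omega
      have hIH := ih (I.erase (I.sup id)) hJcard hJpos L hJsup
      have hME := even_M I hne hpos L hL
      have hsum : (∑ m ∈ Finset.range L, L.choose (m + 1) * Mcount I (m + 1))
          = (∑ m ∈ Finset.range L, L.choose (m + 1) * Ncount I (m + 1))
            + (∑ m ∈ Finset.range L, L.choose (m + 1) * Ncount (I.erase (I.sup id)) (m + 1)) := by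
        rw [← Finset.sum_add_distrib]
        apply Finset.sum_congr rfl
        intro m _
        rw [Mcount_split I hne hpos (m + 1) (by omega), mul_add]
      rw [hsum] at hME
      rw [Nat.odd_iff] at hIH ⊢
      rw [Nat.even_iff] at hME
      omega

/-- if `k ≥ 0` and `a_0,…,a_{α_t}` are the coefficients of `N(I,n)` in the
basis `(C(n+k, i))_i` of generalized binomial coefficients, then some `a_i` is negative. -/
theorem stmt_17 (I : Finset ℕ) (hI : I.Nonempty) (hIpos : ∀ x ∈ I, 1 ≤ x)
    (k : ℤ) (hk : 0 ≤ k) (a : ℕ → ℚ)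
    (ha : ∀ n : ℕ, 1 ≤ n →
      (Ncount I n : ℚ) =
        ∑ i ∈ Finset.range (I.sup id + 1), a i * genChoose ((n : ℤ) + k) i) :
    ∃ i, i ≤ I.sup id ∧ a i < 0 := by
  by_contra hcon
  push_neg at hcon
  have hnn : ∀ i, i ≤ I.sup id → 0 ≤ a i := fun i hi => hcon i hi
  set D := I.sup id with hD
  have hD1 : 1 ≤ D := by
    obtain ⟨x, hx⟩ := hI
    exact le_trans (hIpos x hx) (Finset.le_sup (f := id) hx)
  set K := k.toNat with hKdef
  have hKk : (K : ℤ) = k := Int.toNat_of_nonneg hk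
  have hgen : ∀ n i : ℕ, genChoose ((n : ℤ) + k) i = (((n + K).choose i : ℕ) : ℚ) := by
    intro n i
    rw [← hKk, show ((n : ℤ) + (K : ℤ)) = (((n + K : ℕ) : ℤ)) by push_cast; ring]
    exact genChoose_natCast_s17 _ _
  -- Step 1: N(I,1) = 0 forces a_i = 0 for i ≤ K+1
  have h1 : (0 : ℚ) = ∑ i ∈ Finset.range (D + 1), a i * (((1 + K).choose i : ℕ) : ℚ) := by
    have := ha 1 le_rfl
    rw [Ncount_one I hI hIpos] at this
    simpa only [hgen 1, Nat.cast_zero] using this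
  have hzero : ∀ i, i ≤ K + 1 → i ≤ D → a i = 0 := by
    intro i hiK hiD
    have hterm : ∀ j ∈ Finset.range (D + 1), 0 ≤ a j * (((1 + K).choose j : ℕ) : ℚ) := by
      intro j hj
      have : 0 ≤ a j := hnn j (by have := Finset.mem_range.mp hj; omega)
      positivity
    have hall := (Finset.sum_eq_zero_iff_of_nonneg hterm).mp h1.symm
    have hi : i ∈ Finset.range (D + 1) := Finset.mem_range.mpr (by omega)
    have := hall i hi
    have hcpos : (0 : ℚ) < (((1 + K).choose i : ℕ) : ℚ) := by
      have : 0 < (1 + K).choose i := Nat.choose_pos (by omega)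
      exact_mod_cast this
    rcases mul_eq_zero.mp this with h | h
    · exact h
    · exact absurd h (ne_of_gt hcpos)
  -- Step 2: the "value at 0" of the interpolating polynomial vanishes
  have hB0 : (∑ m ∈ Finset.range (D + 1),
      (-1 : ℚ) ^ m * (((D + 1).choose (m + 1) : ℕ) : ℚ) * (Ncount I (m + 1) : ℚ)) = 0 := by
    have hstep : ∀ m : ℕ, (Ncount I (m + 1) : ℚ)
        = ∑ i ∈ Finset.range (D + 1), a i * (((m + 1 + K).choose i : ℕ) : ℚ) := by
      intro m
      have := ha (m + 1) (by omega)
      simpa only [hgen (m + 1)] using this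
    calc (∑ m ∈ Finset.range (D + 1),
        (-1 : ℚ) ^ m * (((D + 1).choose (m + 1) : ℕ) : ℚ) * (Ncount I (m + 1) : ℚ))
        = ∑ m ∈ Finset.range (D + 1), ∑ i ∈ Finset.range (D + 1),
            a i * ((-1 : ℚ) ^ m * (((D + 1).choose (m + 1) : ℕ) : ℚ)
              * (((m + 1 + K).choose i : ℕ) : ℚ)) := by
          apply Finset.sum_congr rfl
          intro m _
          rw [hstep m, Finset.mul_sum]
          apply Finset.sum_congr rfl
          intro i _; ring
      _ = ∑ i ∈ Finset.range (D + 1), ∑ m ∈ Finset.range (D + 1),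
            a i * ((-1 : ℚ) ^ m * (((D + 1).choose (m + 1) : ℕ) : ℚ)
              * (((m + 1 + K).choose i : ℕ) : ℚ)) := Finset.sum_comm
      _ = ∑ i ∈ Finset.range (D + 1), a i * ((K.choose i : ℕ) : ℚ) := by
          apply Finset.sum_congr rfl
          intro i hi
          rw [← Finset.mul_sum]
          congr 1
          exact altsum_shift (D + 1) i K (by have := Finset.mem_range.mp hi; omega)
      _ = 0 := by
          apply Finset.sum_eq_zero
          intro i hi
          rcases le_or_gt i (K + 1) with h | h
          · rw [hzero i h (by have := Finset.mem_range.mp hi; omega), zero_mul]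
          · rw [Nat.choose_eq_zero_of_lt (by omega), Nat.cast_zero, mul_zero]
  -- Step 3: parity contradiction
  set S : ℕ := ∑ m ∈ Finset.range (D + 1), (D + 1).choose (m + 1) * Ncount I (m + 1) with hSdef
  have hSodd : Odd S := odd_sumN I.card I le_rfl hIpos (D + 1) (by omega)
  set B0z : ℤ := ∑ m ∈ Finset.range (D + 1),
    (-1 : ℤ) ^ m * ((D + 1).choose (m + 1) : ℤ) * (Ncount I (m + 1) : ℤ) with hB0zdef
  have hB0z : B0z = 0 := by
    have : (B0z : ℚ) = 0 := by
      rw [hB0zdef]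
      push_cast
      convert hB0 using 1
    exact_mod_cast this
  have hdvd : (2 : ℤ) ∣ ((S : ℤ) - B0z) := by
    rw [hSdef, hB0zdef]
    push_cast
    rw [← Finset.sum_sub_distrib]
    apply Finset.dvd_sum
    intro m _
    rcases Nat.even_or_odd m with hm | hm
    · rw [hm.neg_one_pow]
      ring_nf
      exact dvd_zero 2
    · rw [hm.neg_one_pow]
      exact ⟨((D + 1).choose (m + 1) : ℤ) * (Ncount I (m + 1) : ℤ), by ring⟩
  rw [hB0z, sub_zero] at hdvd
  have hdvdS : 2 ∣ S := by exact_mod_cast hdvd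
  rw [Nat.odd_iff] at hSodd
  omega
end
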